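/- arXiv:1008.1837 — 3 statements merged into one kernel-verified Lean document; each statement's English description precedes it below -/
import Mathlib

section
/- Fix a Z²-coloring γ of K_n^{6,4} of Z²-rank 2. The family of colored-Laman graphs (spanning edge-sets with exactly 2n+1 edges such that every edge-induced subgraph with n' vertices, m' edges, c' components satisfies m' ≤ 2n' − 3 + 2·rk_{Z²} − 2(c'−1)), if nonempty, forms the set of bases of a matroid on the edge set of K_n^{6,4}. -/
open Finset

section Defs
variable {V E : Type} [Fintype V] [DecidableEq V] [Fintype E] [DecidableEq E]

/-- Signed incidence of edge `e` at vertex `v`. -/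
def incid (th hd : E → V) (e : E) (v : V) : ℤ :=
  (if hd e = v then 1 else 0) - (if th e = v then 1 else 0)

/-- `x : E → ℤ` is a cycle (1-chain with zero boundary) supported on the edge set `S`. -/
def IsCycle (th hd : E → V) (S : Finset E) (x : E → ℤ) : Prop :=
  (∀ e ∉ S, x e = 0) ∧ ∀ v : V, ∑ e, x e * incid th hd e v = 0

/-- Signed color-sum of a chain. -/
def rho (γ : E → ℤ × ℤ) (x : E → ℤ) : ℤ × ℤ := ∑ e, x e • γ e

def q2 (p : ℤ × ℤ) : ℚ × ℚ := ((p.1 : ℚ), (p.2 : ℚ))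

/-- The ℤ²-rank of the colored subgraph with edge set `S`. -/
noncomputable def zrank (th hd : E → V) (γ : E → ℤ × ℤ) (S : Finset E) : ℕ :=
  Module.finrank ℚ (Submodule.span ℚ (q2 '' (rho γ '' {x | IsCycle th hd S x})))

/-- Adjacency via an edge in `S`. -/
def adjS (th hd : E → V) (S : Finset E) (u v : V) : Prop :=
  ∃ e ∈ S, (th e = u ∧ hd e = v) ∨ (th e = v ∧ hd e = u)

/-- Vertices spanned by the edge set `S`. -/
def verts (th hd : E → V) (S : Finset E) : Finset V := S.image th ∪ S.image hd

/-- Number of connected components of the subgraph induced by the edge set `S`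
(on the vertices it spans). -/
noncomputable def ncomp (th hd : E → V) (S : Finset E) : ℕ :=
  Nat.card (Quotient (Relation.EqvGen.setoid
    (fun a b : {v : V // v ∈ verts th hd S} => adjS th hd S a.1 b.1)))

/-- The subgraph with edge set `S` is connected and spans all vertices. -/
def Conn (th hd : E → V) (S : Finset E) : Prop :=
  ∀ u v : V, Relation.EqvGen (adjS th hd S) u v

/-- The function `f(G') = n' + rk_{ℤ²}(G') − c'`. -/
noncomputable def fZ (th hd : E → V) (γ : E → ℤ × ℤ) (S : Finset E) : ℤ :=
  ((verts th hd S).card : ℤ) + (zrank th hd γ S : ℤ) - (ncomp th hd S : ℤ)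

end Defs

/-- Edge set of the complete multigraph `K_n^{6,4}`. -/
def KE (n : ℕ) : Type :=
  ({p : Fin n × Fin n // p.1 < p.2} × Fin 6) ⊕ (Fin n × Fin 4)

instance (n : ℕ) : Fintype (KE n) := by unfold KE; infer_instance
instance (n : ℕ) : DecidableEq (KE n) := by unfold KE; infer_instance

def Kt (n : ℕ) : KE n → Fin n := Sum.elim (fun q => q.1.1.1) (fun q => q.1)
def Kh (n : ℕ) : KE n → Fin n := Sum.elim (fun q => q.1.1.2) (fun q => q.1)

/-- A colored-Laman graph on the ground set `K_n^{6,4}`: `2n+1` edges, and every nonempty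
edge-induced subgraph satisfies `m' ≤ 2n' − 3 + 2·rk_{ℤ²} − 2(c'−1)`. -/
def LamanB (n : ℕ) (γ : KE n → ℤ × ℤ) (S : Finset (KE n)) : Prop :=
  (S.card : ℤ) = 2 * n + 1 ∧
  ∀ S' ⊆ S, S'.Nonempty →
    (S'.card : ℤ) ≤ 2 * ((verts (Kt n) (Kh n) S').card : ℤ) - 3
      + 2 * (zrank (Kt n) (Kh n) γ S' : ℤ) - 2 * ((ncomp (Kt n) (Kh n) S' : ℤ) - 1)


section Aux
variable {V E : Type} [Fintype V] [DecidableEq V] [Fintype E] [DecidableEq E]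
variable (th hd : E → V) (γ : E → ℤ × ℤ)

noncomputable def phiv (e : E) : (V → ℚ) × (ℚ × ℚ) :=
  (fun v => (incid th hd e v : ℚ), q2 (γ e))

noncomputable def incv (e : E) : V → ℚ := fun v => (incid th hd e v : ℚ)

noncomputable def FF (S : Finset E) : ℕ :=
  Module.finrank ℚ (Submodule.span ℚ (phiv th hd γ '' (S : Set E)))

noncomputable def GG (S : Finset E) : Submodule ℚ (V → ℚ) :=
  Submodule.span ℚ (incv th hd '' (S : Set E))

def q2hom : ℤ × ℤ →+ ℚ × ℚ := (Int.castAddHom ℚ).prodMap (Int.castAddHom ℚ)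

lemma q2hom_eq : ∀ p, q2hom p = q2 p := fun _ => rfl

lemma q2_zsmul (n : ℤ) (p : ℤ × ℤ) : q2 (n • p) = (n : ℚ) • q2 p := by
  simp only [q2, Prod.smul_fst, Prod.smul_snd, smul_eq_mul, Prod.smul_mk]
  push_cast
  rfl

lemma q2_sum {α : Type} (s : Finset α) (f : α → ℤ × ℤ) :
    q2 (∑ a ∈ s, f a) = ∑ a ∈ s, q2 (f a) := by
  rw [← q2hom_eq, map_sum]
  exact Finset.sum_congr rfl fun a _ => (q2hom_eq (f a))

set_option maxHeartbeats 1000000 in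
lemma FF_eq_graph_add_zrank (S : Finset E) :
    FF th hd γ S = Module.finrank ℚ (GG th hd S) + zrank th hd γ S := by
  classical
  set π := LinearMap.fst ℚ (V → ℚ) (ℚ × ℚ) with hπ
  set p := Submodule.span ℚ (phiv th hd γ '' (S : Set E)) with hp
  set Z := Submodule.span ℚ (q2 '' (rho γ '' {x | IsCycle th hd S x})) with hZ
  have hmap : p.map π = GG th hd S := by
    rw [hp, Submodule.map_span, GG]
    congr 1
    rw [Set.image_image]
    rfl
  -- key: p ⊓ ker π = Z.map inr
  have hker : p ⊓ LinearMap.ker π = Z.map (LinearMap.inr ℚ (V → ℚ) (ℚ × ℚ)) := by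
    apply le_antisymm
    · rintro z ⟨hzp, hzk⟩
      have hz1 : z.1 = 0 := hzk
      -- get coefficients
      have himg : (phiv th hd γ '' (S : Set E)) =
          Set.range (fun i : {e // e ∈ S} => phiv th hd γ i.1) := Set.image_eq_range _ _
      have : z ∈ Submodule.span ℚ (Set.range (fun i : {e // e ∈ S} => phiv th hd γ i.1)) := by
        rw [← himg]; exact hzp
      obtain ⟨c, hc⟩ := (Finsupp.mem_span_range_iff_exists_finsupp).mp this
      set d : E → ℚ := fun e => if h : e ∈ S then c ⟨e, h⟩ else 0 with hd'
      have hz : ∑ e, d e • phiv th hd γ e = z := by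
        rw [← hc]
        rw [Finsupp.sum_fintype _ _ (by intro i; simp)]
        rw [show (∑ e, d e • phiv th hd γ e) = ∑ e ∈ S, d e • phiv th hd γ e by
          symm; apply Finset.sum_subset (Finset.subset_univ S)
          intro e _ he; simp [hd', he]]
        rw [Finset.sum_subtype S (fun x => Iff.rfl) (fun e => d e • phiv th hd γ e)]
        apply Finset.sum_congr rfl
        intro i _
        simp [hd']
      -- first components vanish: d is a rational cycle
      have hz1' : ∀ v, ∑ e, d e * (incid th hd e v : ℚ) = 0 := by
        intro v
        have := congrArg (fun w => w.1 v) hz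
        simp only [hz1] at this
        simpa [phiv, Prod.fst_sum, Finset.sum_apply] using this
      have hz2 : ∑ e, d e • q2 (γ e) = z.2 := by
        have := congrArg Prod.snd hz
        simpa [phiv, Prod.snd_sum] using this
      -- clear denominators
      set N : ℕ := ∏ e, (d e).den with hN
      have hNd : ∀ e, (d e).den ∣ N := fun e =>
        Finset.dvd_prod_of_mem _ (Finset.mem_univ e)
      have hN0 : (N : ℚ) ≠ 0 := by
        rw [hN]; push_cast
        refine Finset.prod_ne_zero_iff.mpr fun e _ => ?_
        exact_mod_cast (d e).den_nz
      set x : E → ℤ := fun e => (d e).num * ((N / (d e).den : ℕ) : ℤ) with hx'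
      have hkey : ∀ e, (x e : ℚ) = d e * N := by
        intro e
        have hden : ((d e).den : ℚ) ≠ 0 := by
          exact_mod_cast (d e).den_nz
        have h1 : (d e) * ((d e).den : ℚ) = (d e).num := by
          have h := Rat.num_div_den (d e)
          have h' : (d e) * ((d e).den : ℚ)
              = (((d e).num : ℚ) / ((d e).den : ℚ)) * ((d e).den : ℚ) := by rw [h]
          rw [h', div_mul_cancel₀ _ hden]
        have h2 : ((N / (d e).den : ℕ) : ℚ) = (N : ℚ) / ((d e).den : ℚ) :=
          Nat.cast_div_charZero (hNd e)
        have h3 : (x e : ℚ) = ((d e).num : ℚ) * ((N / (d e).den : ℕ) : ℚ) := by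
          simp only [hx', Int.cast_mul, Int.cast_natCast]
        rw [h3, h2, ← h1, mul_comm (d e) ((d e).den : ℚ), mul_assoc,
          mul_comm ((d e).den : ℚ), mul_assoc, div_mul_cancel₀ _ hden]
      have hcyc : IsCycle th hd S x := by
        constructor
        · intro e he
          have : d e = 0 := by simp [hd', he]
          simp [hx', this]
        · intro v
          have : ((∑ e, x e * incid th hd e v : ℤ) : ℚ) = 0 := by
            push_cast
            calc ∑ e, (x e : ℚ) * (incid th hd e v : ℚ)
                = ∑ e, (d e * N) * (incid th hd e v : ℚ) := by
                  apply Finset.sum_congr rfl; intro e _; rw [hkey e]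
              _ = N * ∑ e, d e * (incid th hd e v : ℚ) := by
                  rw [Finset.mul_sum]; apply Finset.sum_congr rfl; intro e _; ring
              _ = 0 := by rw [hz1' v, mul_zero]
          exact_mod_cast this
      have hrho : q2 (rho γ x) = (N : ℚ) • z.2 := by
        rw [rho, q2_sum]
        calc ∑ e, q2 (x e • γ e) = ∑ e, ((N : ℚ) * d e) • q2 (γ e) := by
              apply Finset.sum_congr rfl; intro e _
              rw [q2_zsmul, hkey e]; ring_nf
          _ = (N : ℚ) • ∑ e, d e • q2 (γ e) := by
              rw [Finset.smul_sum]; apply Finset.sum_congr rfl; intro e _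
              rw [smul_smul]
          _ = (N : ℚ) • z.2 := by rw [hz2]
      have hz2mem : z.2 ∈ Z := by
        have hmem : q2 (rho γ x) ∈ Z := by
          rw [hZ]
          exact Submodule.subset_span ⟨rho γ x, ⟨x, hcyc, rfl⟩, rfl⟩
        have : z.2 = (N : ℚ)⁻¹ • q2 (rho γ x) := by
          rw [hrho, smul_smul, inv_mul_cancel₀ hN0, one_smul]
        rw [this]
        exact Submodule.smul_mem _ _ hmem
      refine ⟨z.2, hz2mem, ?_⟩
      rw [LinearMap.inr_apply]
      exact Prod.ext (hz1.symm) rfl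
    · rw [Submodule.map_le_iff_le_comap, hZ, Submodule.span_le]
      rintro _ ⟨_, ⟨x, hx, rfl⟩, rfl⟩
      simp only [SetLike.mem_coe, Submodule.mem_comap, Submodule.mem_inf]
      constructor
      · -- (0, q2 (rho γ x)) ∈ p
        have : (LinearMap.inr ℚ (V → ℚ) (ℚ × ℚ)) (q2 (rho γ x)) =
            ∑ e ∈ S, (x e : ℚ) • phiv th hd γ e := by
          have hfst : ∑ e ∈ S, (x e : ℚ) • incv th hd e = 0 := by
            funext v
            have h0 := hx.2 v
            have h1 : ∑ e, x e * incid th hd e v = ∑ e ∈ S, x e * incid th hd e v := by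
              symm; apply Finset.sum_subset (Finset.subset_univ S)
              intro e _ he; rw [hx.1 e he, zero_mul]
            rw [h1] at h0
            have : ((∑ e ∈ S, x e * incid th hd e v : ℤ) : ℚ) = 0 := by rw [h0]; rfl
            push_cast at this
            simpa [incv, Finset.sum_apply] using this
          have hsnd : ∑ e ∈ S, (x e : ℚ) • q2 (γ e) = q2 (rho γ x) := by
            have h1 : rho γ x = ∑ e ∈ S, x e • γ e := by
              rw [rho]; symm; apply Finset.sum_subset (Finset.subset_univ S)
              intro e _ he; rw [hx.1 e he, zero_smul]
            rw [h1, q2_sum]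
            apply Finset.sum_congr rfl; intro e _
            rw [q2_zsmul]
          rw [Prod.ext_iff]
          constructor
          · simp only [LinearMap.inr_apply, Prod.fst_sum]
            rw [← hfst]; apply Finset.sum_congr rfl; intro e _; rfl
          · simp only [LinearMap.inr_apply, Prod.snd_sum]
            rw [← hsnd]; apply Finset.sum_congr rfl; intro e _; rfl
        rw [this]
        apply Submodule.sum_smul_mem
        intro e he
        exact Submodule.subset_span ⟨e, he, rfl⟩
      · simp [LinearMap.mem_ker, hπ]
  -- rank-nullity
  have hrn := LinearMap.finrank_range_add_finrank_ker (π.domRestrict p)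
  have hrange : LinearMap.range (π.domRestrict p) = p.map π := LinearMap.range_domRestrict p π
  have hkercomap : LinearMap.ker (π.domRestrict p) = (LinearMap.ker π ⊓ p).comap p.subtype := by
    rw [LinearMap.ker_domRestrict, Submodule.comap_inf, Submodule.comap_subtype_self]
    simp
  have e1 : Module.finrank ℚ (LinearMap.ker (π.domRestrict p)) =
      Module.finrank ℚ ↥(LinearMap.ker π ⊓ p) := by
    rw [hkercomap]
    exact LinearEquiv.finrank_eq (Submodule.comapSubtypeEquivOfLe inf_le_right)
  have e2 : (LinearMap.ker π ⊓ p) = Z.map (LinearMap.inr ℚ (V → ℚ) (ℚ × ℚ)) := by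
    rw [inf_comm]; exact hker
  have e3 : Module.finrank ℚ (Z.map (LinearMap.inr ℚ (V → ℚ) (ℚ × ℚ))) =
      Module.finrank ℚ Z :=
    (LinearEquiv.finrank_eq (Submodule.equivMapOfInjective _ LinearMap.inr_injective Z)).symm
  have e4 : Module.finrank ℚ (p.map π) = Module.finrank ℚ (GG th hd S) := by rw [hmap]
  have : FF th hd γ S = Module.finrank ℚ p := rfl
  rw [this, ← hrn, hrange, e4]
  congr 1
  rw [e1, e2, e3]
  rfl

attribute [local instance] Classical.propDecidable

set_option maxHeartbeats 1600000 in
lemma GG_rank (S : Finset E) :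
    Module.finrank ℚ (GG th hd S) + ncomp th hd S = (verts th hd S).card := by
  classical
  set Wt := {v : V // v ∈ verts th hd S} with hWt
  set r : Wt → Wt → Prop := fun a b => adjS th hd S a.1 b.1 with hr
  set C := Quotient (Relation.EqvGen.setoid r) with hC
  haveI : Finite C := Quotient.finite _
  haveI : Fintype C := Fintype.ofFinite C
  set Ot := {v : V // v ∉ verts th hd S} with hOt
  have hite : ∀ (u v : V → ℚ) (w : Wt) (cc : C),
      (if (⟦w⟧ : C) = cc then (u + v) w.1 else 0)
        = (if (⟦w⟧ : C) = cc then u w.1 else 0) + (if (⟦w⟧ : C) = cc then v w.1 else 0) := by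
    intro u v w cc; split_ifs <;> simp
  set Θ : (V → ℚ) →ₗ[ℚ] (Ot → ℚ) × (C → ℚ) :=
    { toFun := fun u => (fun o => u o.1,
        fun cc => ∑ w : Wt, if (⟦w⟧ : C) = cc then u w.1 else 0),
      map_add' := by
        intro u v
        refine Prod.ext rfl ?_
        funext cc
        show (∑ w : Wt, if (⟦w⟧ : C) = cc then (u + v) w.1 else 0)
          = (∑ w : Wt, if (⟦w⟧ : C) = cc then u w.1 else 0)
            + (∑ w : Wt, if (⟦w⟧ : C) = cc then v w.1 else 0)
        rw [← Finset.sum_add_distrib]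
        exact Finset.sum_congr rfl fun w _ => hite u v w cc
      map_smul' := by
        intro a u
        refine Prod.ext rfl ?_
        funext cc
        show (∑ w : Wt, if (⟦w⟧ : C) = cc then (a • u) w.1 else 0)
          = a * (∑ w : Wt, if (⟦w⟧ : C) = cc then u w.1 else 0)
        rw [Finset.mul_sum]
        apply Finset.sum_congr rfl
        intro w _
        split_ifs <;> simp } with hΘ
  have hmem_th : ∀ e ∈ S, th e ∈ verts th hd S := fun e he =>
    Finset.mem_union_left _ (Finset.mem_image_of_mem th he)
  have hmem_hd : ∀ e ∈ S, hd e ∈ verts th hd S := fun e he =>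
    Finset.mem_union_right _ (Finset.mem_image_of_mem hd he)
  have hΘfst : ∀ u (o : Ot), (Θ u).1 o = u o.1 := fun u o => rfl
  have hΘsnd : ∀ u (cc : C), (Θ u).2 cc = ∑ w : Wt, if (⟦w⟧ : C) = cc then u w.1 else 0 :=
    fun u cc => rfl
  -- surjectivity
  have hsurj : Function.Surjective Θ := by
    rintro ⟨a, b⟩
    refine ⟨fun v => if h : v ∈ verts th hd S then
      (if ((⟦(⟨v, h⟩ : Wt)⟧ : C)).out = ⟨v, h⟩ then b ⟦(⟨v, h⟩ : Wt)⟧ else 0)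
      else a ⟨v, h⟩, ?_⟩
    refine Prod.ext ?_ ?_
    · funext o
      rw [hΘfst, dif_neg o.2]
    · funext cc
      rw [hΘsnd, Finset.sum_eq_single cc.out]
      · have h1 : (⟨(cc.out).1, cc.out.2⟩ : Wt) = cc.out := Subtype.ext rfl
        rw [if_pos (Quotient.out_eq cc), dif_pos cc.out.2]
        simp only [h1, Quotient.out_eq cc]
        simp
      · intro w _ hw
        by_cases h2 : (⟦w⟧ : C) = cc
        · rw [if_pos h2, dif_pos w.2]
          have h1 : (⟨w.1, w.2⟩ : Wt) = w := Subtype.ext rfl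
          simp only [h1, h2]
          rw [if_neg fun hcon => hw hcon.symm]
        · rw [if_neg h2]
      · intro hcon; exact absurd (Finset.mem_univ _) hcon
  -- GG ≤ ker Θ
  have hGle : GG th hd S ≤ LinearMap.ker Θ := by
    rw [GG, Submodule.span_le]
    rintro _ ⟨e, he, rfl⟩
    rw [SetLike.mem_coe, LinearMap.mem_ker]
    refine Prod.ext ?_ ?_
    · funext o
      rw [hΘfst]
      have h1 : hd e ≠ o.1 := fun h => o.2 (h ▸ hmem_hd e he)
      have h2 : th e ≠ o.1 := fun h => o.2 (h ▸ hmem_th e he)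
      simp [incv, incid, h1, h2]
    · funext cc
      rw [hΘsnd]
      set wth : Wt := ⟨th e, hmem_th e he⟩ with hwth
      set whd : Wt := ⟨hd e, hmem_hd e he⟩ with hwhd
      have hsame : (⟦wth⟧ : C) = ⟦whd⟧ :=
        Quotient.sound (Relation.EqvGen.rel _ _ ⟨e, he, Or.inl ⟨rfl, rfl⟩⟩)
      have hterm : ∀ w : Wt, (if (⟦w⟧ : C) = cc then incv th hd e w.1 else 0)
          = (if w = whd ∧ (⟦w⟧ : C) = cc then 1 else 0)
            - (if w = wth ∧ (⟦w⟧ : C) = cc then 1 else 0) := by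
        intro w
        have e1 : (hd e = w.1) ↔ (w = whd) := by
          constructor
          · intro h; exact Subtype.ext h.symm
          · intro h; rw [h]
        have e2 : (th e = w.1) ↔ (w = wth) := by
          constructor
          · intro h; exact Subtype.ext h.symm
          · intro h; rw [h]
        by_cases hcc : (⟦w⟧ : C) = cc
        · rw [if_pos hcc]
          show ((incid th hd e w.1 : ℤ) : ℚ) = _
          rw [incid]
          push_cast
          rw [if_congr e1 rfl rfl, if_congr e2 rfl rfl]
          simp [hcc]
        · simp [hcc]
      rw [Finset.sum_congr rfl (fun w _ => hterm w), Finset.sum_sub_distrib]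
      have hgen : ∀ z : Wt, (∑ w : Wt, if w = z ∧ (⟦w⟧ : C) = cc then (1:ℚ) else 0)
          = if (⟦z⟧ : C) = cc then 1 else 0 := by
        intro z
        rw [Finset.sum_eq_single z]
        · by_cases h : (⟦z⟧ : C) = cc <;> simp [h]
        · intro w _ hw; simp [hw]
        · intro h; exact absurd (Finset.mem_univ _) h
      rw [hgen whd, hgen wth, hsame]
      simp
  -- path lemma
  have hpath : ∀ a b : Wt, Relation.EqvGen r a b →
      (fun v => (if b.1 = v then (1:ℚ) else 0) - (if a.1 = v then 1 else 0)) ∈ GG th hd S := by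
    intro a b h
    induction h with
    | rel a b hab =>
        obtain ⟨e, he, hor⟩ := hab
        rcases hor with ⟨h1, h2⟩ | ⟨h1, h2⟩
        · have heq : (fun v => (if b.1 = v then (1:ℚ) else 0) - (if a.1 = v then 1 else 0))
              = incv th hd e := by
            funext v
            show _ = ((incid th hd e v : ℤ) : ℚ)
            rw [incid]; push_cast; rw [h1, h2]
          rw [heq]; exact Submodule.subset_span ⟨e, he, rfl⟩
        · have heq : (fun v => (if b.1 = v then (1:ℚ) else 0) - (if a.1 = v then 1 else 0))
              = -incv th hd e := by
            funext v
            show _ = -((incid th hd e v : ℤ) : ℚ)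
            rw [incid]; push_cast; rw [h1, h2]; ring
          rw [heq]; exact neg_mem (Submodule.subset_span ⟨e, he, rfl⟩)
    | refl a =>
        have heq : (fun v => (if a.1 = v then (1:ℚ) else 0) - (if a.1 = v then 1 else 0))
            = (0 : V → ℚ) := by funext v; ring_nf; rfl
        rw [heq]; exact Submodule.zero_mem _
    | symm a b _ ih =>
        have heq : (fun v => (if a.1 = v then (1:ℚ) else 0) - (if b.1 = v then 1 else 0))
            = -(fun v => (if b.1 = v then (1:ℚ) else 0) - (if a.1 = v then 1 else 0)) := by
          funext v; simp
        rw [heq]; exact neg_mem ih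
    | trans a b c _ _ ih1 ih2 =>
        have heq : (fun v => (if c.1 = v then (1:ℚ) else 0) - (if a.1 = v then 1 else 0))
            = (fun v => (if b.1 = v then (1:ℚ) else 0) - (if a.1 = v then 1 else 0))
              + (fun v => (if c.1 = v then (1:ℚ) else 0) - (if b.1 = v then 1 else 0)) := by
          funext v; simp only [Pi.add_apply]; ring
        rw [heq]; exact add_mem ih1 ih2
  -- ker Θ ≤ GG
  have hkerle : LinearMap.ker Θ ≤ GG th hd S := by
    intro u hu
    rw [LinearMap.mem_ker] at hu
    have ha : ∀ o : Ot, u o.1 = 0 := fun o => by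
      have h := congrArg (fun z => z.1 o) hu
      simpa [hΘfst] using h
    have hb : ∀ cc : C, (∑ w : Wt, if (⟦w⟧ : C) = cc then u w.1 else 0) = 0 := fun cc => by
      have h := congrArg (fun z => z.2 cc) hu
      simpa [hΘsnd] using h
    have hrep : u = ∑ w : Wt, u w.1 • (fun v => (if w.1 = v then (1:ℚ) else 0)
        - (if (((⟦w⟧ : C)).out).1 = v then 1 else 0)) := by
      funext v
      rw [Finset.sum_apply]
      simp only [Pi.smul_apply, smul_eq_mul]
      have hsplit : ∀ w : Wt, u w.1 * ((fun v => (if w.1 = v then (1:ℚ) else 0)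
          - (if (((⟦w⟧ : C)).out).1 = v then 1 else 0)) v)
          = (if w.1 = v then u w.1 else 0)
            - (if (((⟦w⟧ : C)).out).1 = v then u w.1 else 0) := by
        intro w; simp only []; split_ifs <;> ring
      rw [Finset.sum_congr rfl fun w _ => hsplit w, Finset.sum_sub_distrib]
      have hfirst : (∑ w : Wt, if w.1 = v then u w.1 else 0) = u v := by
        by_cases hv : v ∈ verts th hd S
        · rw [Finset.sum_eq_single (⟨v, hv⟩ : Wt)]
          · simp
          · intro w _ hw
            exact if_neg (fun h => hw (Subtype.ext h))
          · intro h; exact absurd (Finset.mem_univ _) h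
        · rw [Finset.sum_eq_zero, (show u v = 0 from ha ⟨v, hv⟩)]
          intro w _
          exact if_neg (fun h => hv (by rw [← h]; exact w.2))
      have hsecond : (∑ w : Wt, if (((⟦w⟧ : C)).out).1 = v then u w.1 else 0) = 0 := by
        have hterm2 : ∀ w : Wt, (if (((⟦w⟧ : C)).out).1 = v then u w.1 else 0)
            = ∑ cc : C, if (⟦w⟧ : C) = cc then
                (if (cc.out).1 = v then u w.1 else 0) else 0 := by
          intro w
          rw [Finset.sum_ite_eq]
          simp
        rw [Finset.sum_congr rfl fun w _ => hterm2 w, Finset.sum_comm]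
        apply Finset.sum_eq_zero
        intro cc _
        by_cases hv : (cc.out).1 = v
        · calc (∑ w : Wt, if (⟦w⟧ : C) = cc then (if (cc.out).1 = v then u w.1 else 0) else 0)
              = ∑ w : Wt, (if (⟦w⟧ : C) = cc then u w.1 else 0) := by
                apply Finset.sum_congr rfl; intro w _
                split_ifs <;> simp
            _ = 0 := hb cc
        · apply Finset.sum_eq_zero; intro w _
          split_ifs <;> simp
      rw [hfirst, hsecond, sub_zero]
    rw [hrep]
    apply Submodule.sum_smul_mem
    intro w _
    exact hpath _ _ (Quotient.exact (Quotient.out_eq (⟦w⟧ : C)))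
  have hkerEq : LinearMap.ker Θ = GG th hd S := le_antisymm hkerle hGle
  -- rank count
  have hrn := LinearMap.finrank_range_add_finrank_ker Θ
  rw [LinearMap.range_eq_top.mpr hsurj, finrank_top, hkerEq] at hrn
  have hdom : Module.finrank ℚ (V → ℚ) = Fintype.card V := Module.finrank_pi ℚ
  have hOtcard : Fintype.card Ot = Fintype.card V - (verts th hd S).card := by
    have h1 : Fintype.card Ot = Fintype.card V - Fintype.card {v : V // v ∈ verts th hd S} :=
      Fintype.card_subtype_compl _
    rw [h1, Fintype.card_coe]
  have hcod : Module.finrank ℚ ((Ot → ℚ) × (C → ℚ))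
      = (Fintype.card V - (verts th hd S).card) + Fintype.card C := by
    rw [Module.finrank_prod, Module.finrank_pi, Module.finrank_pi, hOtcard]
  rw [hcod, hdom] at hrn
  have hc : ncomp th hd S = Fintype.card C := by
    rw [ncomp, ← hC, Nat.card_eq_fintype_card]
  have hvc : (verts th hd S).card ≤ Fintype.card V := Finset.card_le_univ _
  omega

lemma bound_bridge (S' : Finset E) :
    2 * ((verts th hd S').card : ℤ) - 3 + 2 * (zrank th hd γ S' : ℤ)
      - 2 * ((ncomp th hd S' : ℤ) - 1) = 2 * (FF th hd γ S' : ℤ) - 1 := by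
  have h1 := FF_eq_graph_add_zrank th hd γ S'
  have h2 := GG_rank th hd S'
  omega

lemma FF_mono {S T : Finset E} (h : S ⊆ T) : FF th hd γ S ≤ FF th hd γ T :=
  Submodule.finrank_mono (Submodule.span_mono (Set.image_mono h))

lemma FF_submod (S T : Finset E) :
    FF th hd γ (S ∪ T) + FF th hd γ (S ∩ T) ≤ FF th hd γ S + FF th hd γ T := by
  classical
  set A := Submodule.span ℚ (phiv th hd γ '' (S : Set E)) with hA
  set B := Submodule.span ℚ (phiv th hd γ '' (T : Set E)) with hB
  have hsup : Submodule.span ℚ (phiv th hd γ '' ((S ∪ T : Finset E) : Set E)) = A ⊔ B := by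
    rw [hA, hB, Finset.coe_union, Set.image_union, Submodule.span_union]
  have hinf : Submodule.span ℚ (phiv th hd γ '' ((S ∩ T : Finset E) : Set E)) ≤ A ⊓ B := by
    refine le_inf ?_ ?_ <;>
      exact Submodule.span_mono (Set.image_mono (by intro x hx <;> simp_all))
  have key := Submodule.finrank_sup_add_finrank_inf_eq A B
  have h1 : FF th hd γ (S ∪ T) = Module.finrank ℚ ↥(A ⊔ B) := by rw [FF, hsup]
  have h2 : FF th hd γ (S ∩ T) ≤ Module.finrank ℚ ↥(A ⊓ B) := Submodule.finrank_mono hinf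
  have h3 : FF th hd γ S = Module.finrank ℚ A := rfl
  have h4 : FF th hd γ T = Module.finrank ℚ B := rfl
  omega

lemma FF_insert_mem {S : Finset E} {x : E}
    (h : FF th hd γ (insert x S) ≤ FF th hd γ S) :
    phiv th hd γ x ∈ Submodule.span ℚ (phiv th hd γ '' (S : Set E)) := by
  classical
  by_contra hx
  have hlt : Submodule.span ℚ (phiv th hd γ '' (S : Set E)) <
      Submodule.span ℚ (phiv th hd γ '' ((insert x S : Finset E) : Set E)) := by
    refine lt_of_le_of_ne (Submodule.span_mono (Set.image_mono (by simp))) ?_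
    intro hEq
    apply hx
    rw [hEq]
    exact Submodule.subset_span ⟨x, by simp, rfl⟩
  have := Submodule.finrank_lt_finrank_of_lt hlt
  rw [FF, FF] at h
  omega

lemma FF_le_of_span {Z M : Finset E}
    (h : ∀ y ∈ Z, phiv th hd γ y ∈ Submodule.span ℚ (phiv th hd γ '' (M : Set E))) :
    FF th hd γ Z ≤ FF th hd γ M := by
  apply Submodule.finrank_mono
  rw [Submodule.span_le]
  rintro _ ⟨y, hy, rfl⟩
  exact h y hy

/-- Count-independence. -/
def Indep (S : Finset E) : Prop :=
  ∀ S' ⊆ S, S'.Nonempty → (S'.card : ℤ) ≤ 2 * FF th hd γ S' - 1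

/-- Tight sets inside `I₁`. -/
def TightP (I₁ T : Finset E) : Prop :=
  T.Nonempty ∧ T ⊆ I₁ ∧ (T.card : ℤ) = 2 * FF th hd γ T - 1

lemma tight_union {I₁ T₁ T₂ : Finset E} (hI : Indep th hd γ I₁)
    (h1 : TightP th hd γ I₁ T₁) (h2 : TightP th hd γ I₁ T₂)
    (hint : (T₁ ∩ T₂).Nonempty) : TightP th hd γ I₁ (T₁ ∪ T₂) := by
  obtain ⟨hne1, hsub1, hc1⟩ := h1
  obtain ⟨hne2, hsub2, hc2⟩ := h2
  have hsubU : T₁ ∪ T₂ ⊆ I₁ := Finset.union_subset hsub1 hsub2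
  have hiu : (T₁ ∪ T₂).card + (T₁ ∩ T₂).card = T₁.card + T₂.card :=
    Finset.card_union_add_card_inter T₁ T₂
  have hindI : ((T₁ ∩ T₂).card : ℤ) ≤ 2 * FF th hd γ (T₁ ∩ T₂) - 1 :=
    hI _ ((Finset.inter_subset_left).trans hsub1) hint
  have hindU : ((T₁ ∪ T₂).card : ℤ) ≤ 2 * FF th hd γ (T₁ ∪ T₂) - 1 :=
    hI _ hsubU (hne1.mono Finset.subset_union_left)
  have hsm := FF_submod th hd γ T₁ T₂
  refine ⟨hne1.mono Finset.subset_union_left, hsubU, ?_⟩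
  omega

lemma augment {I₁ I₂ : Finset E} (h1 : Indep th hd γ I₁) (h2 : Indep th hd γ I₂)
    (hcard : I₁.card < I₂.card) :
    ∃ x ∈ I₂, x ∉ I₁ ∧ Indep th hd γ (insert x I₁) := by
  classical
  by_contra hcon
  push_neg at hcon
  set X := I₂ \ I₁ with hX
  -- Step A: every x in X is spanned by a tight set
  have hstep : ∀ x ∈ X, ∃ T : Finset E, TightP th hd γ I₁ T ∧
      phiv th hd γ x ∈ Submodule.span ℚ (phiv th hd γ '' (T : Set E)) := by
    intro x hx
    obtain ⟨hxI2, hxnI1⟩ := Finset.mem_sdiff.mp hx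
    have hnind := hcon x hxI2 hxnI1
    rw [Indep] at hnind
    push_neg at hnind
    obtain ⟨S', hS'sub, hS'ne, hviol⟩ := hnind
    have hxS' : x ∈ S' := by
      by_contra hxS'
      have : S' ⊆ I₁ := fun y hy => by
        rcases Finset.mem_insert.mp (hS'sub hy) with h | h
        · exact absurd (h ▸ hy) hxS'
        · exact h
      exact absurd (h1 S' this hS'ne) (not_le.mpr hviol)
    set T := S'.erase x with hT
    have hTsub : T ⊆ I₁ := by
      intro y hy
      obtain ⟨hyx, hyS'⟩ := Finset.mem_erase.mp hy
      rcases Finset.mem_insert.mp (hS'sub hyS') with h | h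
      · exact absurd h hyx
      · exact h
    have hTne : T.Nonempty := by
      rw [Finset.nonempty_iff_ne_empty]
      intro hemp
      have hS'x : S' = {x} := by
        apply Finset.eq_singleton_iff_unique_mem.mpr
        refine ⟨hxS', fun y hy => ?_⟩
        by_contra hyx
        exact (Finset.notMem_empty y) (hemp ▸ Finset.mem_erase.mpr ⟨hyx, hy⟩)
      have hI2x : ({x} : Finset E) ⊆ I₂ := Finset.singleton_subset_iff.mpr hxI2
      have := h2 {x} hI2x (Finset.singleton_nonempty x)
      rw [hS'x] at hviol
      omega
    have hins : insert x T = S' := Finset.insert_erase hxS'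
    have hcardT : T.card = S'.card - 1 := Finset.card_erase_of_mem hxS'
    have hcardT' : (T.card : ℤ) = (S'.card : ℤ) - 1 := by
      have : 1 ≤ S'.card := Finset.card_pos.mpr hS'ne
      omega
    have hmono : FF th hd γ T ≤ FF th hd γ S' := FF_mono th hd γ (hT ▸ Finset.erase_subset x S')
    have hTind := h1 T hTsub hTne
    -- equalities
    have hFFeq : FF th hd γ S' ≤ FF th hd γ T := by omega
    have hTight : TightP th hd γ I₁ T := by
      refine ⟨hTne, hTsub, ?_⟩
      omega
    refine ⟨T, hTight, ?_⟩
    apply FF_insert_mem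
    rw [hins]
    exact le_trans (le_of_eq rfl) (hFFeq.trans (le_refl _))
  choose! T hT hTspan using hstep
  -- Step B: maximal tight supersets
  have hstepM : ∀ x ∈ X, ∃ Mm : Finset E, (TightP th hd γ I₁ Mm ∧ T x ⊆ Mm) ∧
      ∀ M', TightP th hd γ I₁ M' → T x ⊆ M' → M'.card ≤ Mm.card := by
    intro x hx
    have hfam : (I₁.powerset.filter (fun Mm => TightP th hd γ I₁ Mm ∧ T x ⊆ Mm)).Nonempty := by
      refine ⟨T x, ?_⟩
      rw [Finset.mem_filter, Finset.mem_powerset]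
      exact ⟨(hT x hx).2.1, hT x hx, Finset.Subset.refl _⟩
    obtain ⟨Mm, hMmem, hMmax⟩ := Finset.exists_max_image _ Finset.card hfam
    rw [Finset.mem_filter, Finset.mem_powerset] at hMmem
    refine ⟨Mm, hMmem.2, fun M' hM' hTM' => ?_⟩
    apply hMmax
    rw [Finset.mem_filter, Finset.mem_powerset]
    exact ⟨hM'.2.1, hM', hTM'⟩
  choose! M hM hMmax using hstepM
  -- distinct maximal tight sets are disjoint
  have hdisj : ∀ x ∈ X, ∀ y ∈ X, M x ≠ M y → Disjoint (M x) (M y) := by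
    intro x hx y hy hne
    by_contra hnd
    have hint : (M x ∩ M y).Nonempty := Finset.not_disjoint_iff_nonempty_inter.mp hnd
    have hU := tight_union th hd γ h1 (hM x hx).1 (hM y hy).1 hint
    have hx1 : M x ⊆ M x ∪ M y := Finset.subset_union_left
    have hy1 : M y ⊆ M x ∪ M y := Finset.subset_union_right
    have hcx : (M x ∪ M y).card ≤ (M x).card :=
      hMmax x hx _ hU ((hM x hx).2.trans hx1)
    have hcy : (M x ∪ M y).card ≤ (M y).card :=
      hMmax y hy _ hU ((hM y hy).2.trans hy1)
    have hex : M x = M x ∪ M y := Finset.eq_of_subset_of_card_le hx1 hcx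
    have hey : M y = M x ∪ M y := Finset.eq_of_subset_of_card_le hy1 hcy
    exact hne (hex.trans hey.symm)
  -- Step C: counting
  set 𝓜 := X.image M with h𝓜
  set U := 𝓜.biUnion id with hU
  set Z : Finset E → Finset E := fun Mm => (I₂ ∩ Mm) ∪ X.filter (fun y => M y = Mm) with hZ
  have hZcard : ∀ Mm ∈ 𝓜, (Z Mm).card ≤ Mm.card := by
    intro Mm hMm
    obtain ⟨x, hx, hxM⟩ := Finset.mem_image.mp hMm
    have hZsub : Z Mm ⊆ I₂ := by
      intro y hy
      rcases Finset.mem_union.mp hy with h | h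
      · exact (Finset.mem_inter.mp h).1
      · exact (Finset.mem_sdiff.mp (Finset.mem_filter.mp h).1).1
    have hZne : (Z Mm).Nonempty := by
      refine ⟨x, Finset.mem_union_right _ ?_⟩
      rw [Finset.mem_filter]
      exact ⟨hx, hxM⟩
    have hZspan : ∀ y ∈ Z Mm, phiv th hd γ y ∈
        Submodule.span ℚ (phiv th hd γ '' (Mm : Set E)) := by
      intro y hy
      rcases Finset.mem_union.mp hy with h | h
      · exact Submodule.subset_span ⟨y, (Finset.mem_inter.mp h).2, rfl⟩
      · obtain ⟨hyX, hyM⟩ := Finset.mem_filter.mp h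
        have h1' := hTspan y hyX
        have h2' : Submodule.span ℚ (phiv th hd γ '' ((T y : Finset E) : Set E)) ≤
            Submodule.span ℚ (phiv th hd γ '' (Mm : Set E)) := by
          apply Submodule.span_mono
          apply Set.image_mono
          intro z hz
          have := (hM y hyX).2 hz
          rwa [hyM] at this
        exact h2' h1'
    have hFFle : FF th hd γ (Z Mm) ≤ FF th hd γ Mm := FF_le_of_span th hd γ hZspan
    have hind := h2 (Z Mm) hZsub hZne
    have htight : (Mm.card : ℤ) = 2 * FF th hd γ Mm - 1 := by
      have := (hM x hx).1.2.2
      rwa [hxM] at this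
    omega
  have hUsub : U ⊆ I₁ := by
    intro y hy
    obtain ⟨Mm, hMm, hyMm⟩ := Finset.mem_biUnion.mp hy
    obtain ⟨x, hx, hxM⟩ := Finset.mem_image.mp hMm
    exact (hM x hx).1.2.1 (by rwa [← hxM] at hyMm)
  have hcover : I₂ ⊆ (I₁ \ U) ∪ 𝓜.biUnion Z := by
    intro y hy
    by_cases hyI1 : y ∈ I₁
    · by_cases hyU : y ∈ U
      · obtain ⟨Mm, hMm, hyMm⟩ := Finset.mem_biUnion.mp hyU
        refine Finset.mem_union_right _ (Finset.mem_biUnion.mpr ⟨Mm, hMm, ?_⟩)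
        exact Finset.mem_union_left _ (Finset.mem_inter.mpr ⟨hy, hyMm⟩)
      · exact Finset.mem_union_left _ (Finset.mem_sdiff.mpr ⟨hyI1, hyU⟩)
    · have hyX : y ∈ X := Finset.mem_sdiff.mpr ⟨hy, hyI1⟩
      refine Finset.mem_union_right _ (Finset.mem_biUnion.mpr
        ⟨M y, Finset.mem_image_of_mem M hyX, ?_⟩)
      refine Finset.mem_union_right _ ?_
      rw [Finset.mem_filter]
      exact ⟨hyX, rfl⟩
  have hUcard : U.card = ∑ Mm ∈ 𝓜, Mm.card := by
    rw [hU]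
    refine Finset.card_biUnion ?_
    intro Mx hMx My hMy hne
    obtain ⟨x, hx, hxM⟩ := Finset.mem_image.mp hMx
    obtain ⟨y, hy, hyM⟩ := Finset.mem_image.mp hMy
    have := hdisj x hx y hy (by rw [hxM, hyM]; exact hne)
    rwa [hxM, hyM] at this
  have hchain : I₂.card ≤ I₁.card := by
    calc I₂.card ≤ ((I₁ \ U) ∪ 𝓜.biUnion Z).card := Finset.card_le_card hcover
      _ ≤ (I₁ \ U).card + (𝓜.biUnion Z).card := Finset.card_union_le _ _
      _ ≤ (I₁ \ U).card + ∑ Mm ∈ 𝓜, (Z Mm).card :=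
          Nat.add_le_add_left (Finset.card_biUnion_le) _
      _ ≤ (I₁ \ U).card + ∑ Mm ∈ 𝓜, Mm.card :=
          Nat.add_le_add_left (Finset.sum_le_sum hZcard) _
      _ = (I₁ \ U).card + U.card := by rw [hUcard]
      _ = I₁.card := by rw [Finset.card_sdiff_add_card_eq_card hUsub]
  omega

end Aux

/-- For a coloring of `K_n^{6,4}` of ℤ²-rank 2, the family of colored-Laman graphs, if
nonempty, forms the set of bases of a matroid (all have cardinality `2n+1` by definition,
and the base-exchange property holds). -/
theorem statement11 (n : ℕ) (γ : KE n → ℤ × ℤ)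
    (h2 : zrank (Kt n) (Kh n) γ Finset.univ = 2)
    (hne : ∃ S, LamanB n γ S) :
    ∀ B₁ B₂ : Finset (KE n), LamanB n γ B₁ → LamanB n γ B₂ →
      ∀ e ∈ B₁, e ∉ B₂ →
        ∃ e' ∈ B₂, e' ∉ B₁ ∧ LamanB n γ (insert e' (B₁.erase e)) := by
  intro B₁ B₂ hB₁ hB₂ e he henB₂
  obtain ⟨hc1, hs1⟩ := hB₁
  obtain ⟨hc2, hs2⟩ := hB₂
  have hI1 : Indep (Kt n) (Kh n) γ (B₁.erase e) := by
    intro S' hsub hne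
    have h := hs1 S' (hsub.trans (Finset.erase_subset _ _)) hne
    rwa [bound_bridge] at h
  have hI2 : Indep (Kt n) (Kh n) γ B₂ := by
    intro S' hsub hne
    have h := hs2 S' hsub hne
    rwa [bound_bridge] at h
  have hb1 : B₁.card = 2 * n + 1 := by omega
  have hb2 : B₂.card = 2 * n + 1 := by omega
  have hcard : (B₁.erase e).card < B₂.card := by
    rw [Finset.card_erase_of_mem he]
    omega
  obtain ⟨x, hxB₂, hxnI, hxind⟩ := augment (Kt n) (Kh n) γ hI1 hI2 hcard
  have hxne : x ≠ e := fun h => henB₂ (h ▸ hxB₂)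
  have hxnB₁ : x ∉ B₁ := fun h => hxnI (Finset.mem_erase.mpr ⟨hxne, h⟩)
  refine ⟨x, hxB₂, hxnB₁, ?_, ?_⟩
  · rw [Finset.card_insert_of_notMem hxnI, Finset.card_erase_of_mem he]
    have h1 : 1 ≤ B₁.card := by omega
    push_cast
    omega
  · intro S' hsub hne
    have h := hxind S' hsub hne
    rw [bound_bridge]
    exact h
end

section
/- Let (G,γ) be a Z²-colored graph with n vertices and 2n+1 edges. Then (G,γ) is colored-Laman if and only if for every edge ij, the graph obtained by adding a parallel copy of ij with the same color is a (2,2,2)-colored graph. -/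
open Finset

section Aux
variable {V E : Type} [Fintype V] [DecidableEq V] [Fintype E] [DecidableEq E]

set_option linter.unusedSectionVars false

def pr (e₀ : E) : E ⊕ Unit → E := Sum.elim id fun _ => e₀

@[simp] lemma pr_inl (e₀ e : E) : pr e₀ (Sum.inl e) = e := rfl
@[simp] lemma pr_inr (e₀ : E) (u : Unit) : pr e₀ (Sum.inr u) = e₀ := rfl

lemma sum_sum_unit {M : Type} [AddCommMonoid M] (g : E ⊕ Unit → M) :
    ∑ e', g e' = (∑ e, g (Sum.inl e)) + g (Sum.inr ()) := by
  rw [Fintype.sum_sum_type]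
  simp

/-- forward chain transport -/
def fw (e₀ : E) (x : E ⊕ Unit → ℤ) : E → ℤ :=
  fun e => x (Sum.inl e) + (if e = e₀ then x (Sum.inr ()) else 0)

lemma fw_sum (e₀ : E) (x : E ⊕ Unit → ℤ)
    {M : Type} [AddCommGroup M] (f : E → M) :
    ∑ e, fw e₀ x e • f e = ∑ e', x e' • f (pr e₀ e') := by
  rw [sum_sum_unit (g := fun e' => x e' • f (pr e₀ e'))]
  simp only [pr_inl, pr_inr]
  have h : ∀ e, fw e₀ x e • f e
      = x (Sum.inl e) • f e + (if e = e₀ then x (Sum.inr ()) • f e else 0) := by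
    intro e
    simp only [fw, add_zsmul, ite_smul, zero_zsmul]
  rw [Finset.sum_congr rfl (fun e _ => h e), Finset.sum_add_distrib,
    Finset.sum_ite_eq' Finset.univ e₀ (fun e => x (Sum.inr ()) • f e)]
  simp

/-- backward chain transport -/
def bk (e₀ : E) (S : Finset (E ⊕ Unit)) (y : E → ℤ) : E ⊕ Unit → ℤ :=
  Sum.elim (fun e => if Sum.inl e ∈ S then y e else 0)
    (fun _ => if Sum.inl e₀ ∈ S then 0 else y e₀)

lemma bk_eq_of_ne (e₀ : E) (S : Finset (E ⊕ Unit)) (y : E → ℤ)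
    (hy : ∀ e ∉ S.image (pr e₀), y e = 0) {e : E} (he : e ≠ e₀) :
    bk e₀ S y (Sum.inl e) = y e := by
  simp only [bk, Sum.elim_inl]
  split
  · rfl
  · rename_i h
    rw [hy]
    intro hm
    rcases Finset.mem_image.mp hm with ⟨e', he', hpe⟩
    rcases e' with e' | u
    · exact h (by simpa [pr] using hpe ▸ he')
    · exact he (by simpa [pr] using hpe.symm)

lemma bk_sum (e₀ : E) (S : Finset (E ⊕ Unit)) (y : E → ℤ)
    (hy : ∀ e ∉ S.image (pr e₀), y e = 0)
    {M : Type} [AddCommGroup M] (f : E → M) :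
    ∑ e', bk e₀ S y e' • f (pr e₀ e') = ∑ e, y e • f e := by
  rw [sum_sum_unit (g := fun e' => bk e₀ S y e' • f (pr e₀ e'))]
  simp only [pr_inl, pr_inr]
  rw [← Finset.add_sum_erase Finset.univ (fun e => bk e₀ S y (Sum.inl e) • f e) (Finset.mem_univ e₀),
      ← Finset.add_sum_erase Finset.univ (fun e => y e • f e) (Finset.mem_univ e₀)]
  have h1 : ∑ e ∈ Finset.univ.erase e₀, bk e₀ S y (Sum.inl e) • f e
      = ∑ e ∈ Finset.univ.erase e₀, y e • f e := by
    apply Finset.sum_congr rfl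
    intro e he
    rw [bk_eq_of_ne e₀ S y hy (Finset.ne_of_mem_erase he)]
  rw [h1]
  have h2 : bk e₀ S y (Sum.inl e₀) + bk e₀ S y (Sum.inr ()) = y e₀ := by
    simp only [bk, Sum.elim_inl, Sum.elim_inr]
    split <;> simp
  calc bk e₀ S y (Sum.inl e₀) • f e₀ + ∑ e ∈ Finset.univ.erase e₀, y e • f e
        + bk e₀ S y (Sum.inr ()) • f e₀
      = (bk e₀ S y (Sum.inl e₀) + bk e₀ S y (Sum.inr ())) • f e₀
        + ∑ e ∈ Finset.univ.erase e₀, y e • f e := by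
        rw [add_zsmul]; abel
    _ = y e₀ • f e₀ + ∑ e ∈ Finset.univ.erase e₀, y e • f e := by rw [h2]

end Aux

section Aux2
variable {V E : Type} [Fintype V] [DecidableEq V] [Fintype E] [DecidableEq E]
set_option linter.unusedSectionVars false

lemma fw_sum_mul (e₀ : E) (x : E ⊕ Unit → ℤ) (f : E → ℤ) :
    ∑ e, fw e₀ x e * f e = ∑ e', x e' * f (pr e₀ e') := by
  simpa [zsmul_eq_mul] using fw_sum e₀ x (M := ℤ) f

lemma bk_sum_mul (e₀ : E) (S : Finset (E ⊕ Unit)) (y : E → ℤ)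
    (hy : ∀ e ∉ S.image (pr e₀), y e = 0) (f : E → ℤ) :
    ∑ e', bk e₀ S y e' * f (pr e₀ e') = ∑ e, y e * f e := by
  simpa [zsmul_eq_mul] using bk_sum e₀ S y hy (M := ℤ) f

lemma isCycle_fw (th hd : E → V) (e₀ : E) (S : Finset (E ⊕ Unit)) (x : E ⊕ Unit → ℤ)
    (hx : IsCycle (th ∘ pr e₀) (hd ∘ pr e₀) S x) :
    IsCycle th hd (S.image (pr e₀)) (fw e₀ x) := by
  constructor
  · intro e he
    have h1 : Sum.inl e ∉ S := fun hm => he (by simpa using Finset.mem_image_of_mem (pr e₀) hm)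
    have h2 : e = e₀ → x (Sum.inr ()) = 0 := by
      intro heq
      apply hx.1
      intro hm
      exact he (by rw [heq]; simpa using Finset.mem_image_of_mem (pr e₀) hm)
    simp only [fw, hx.1 _ h1, zero_add]
    split
    · exact h2 ‹_›
    · rfl
  · intro v
    rw [fw_sum_mul e₀ x (fun e => incid th hd e v)]
    exact hx.2 v

lemma rho_fw (γ : E → ℤ × ℤ) (e₀ : E) (x : E ⊕ Unit → ℤ) :
    rho γ (fw e₀ x) = rho (γ ∘ pr e₀) x := by
  unfold rho
  exact fw_sum e₀ x γ

lemma isCycle_bk (th hd : E → V) (e₀ : E) (S : Finset (E ⊕ Unit)) (y : E → ℤ)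
    (hy : IsCycle th hd (S.image (pr e₀)) y) :
    IsCycle (th ∘ pr e₀) (hd ∘ pr e₀) S (bk e₀ S y) := by
  constructor
  · rintro (e | u) he
    · simp only [bk, Sum.elim_inl, if_neg he]
    · simp only [bk, Sum.elim_inr]
      split
      · rfl
      · rename_i h
        apply hy.1
        intro hm
        rcases Finset.mem_image.mp hm with ⟨e', he', hpe⟩
        rcases e' with e' | u'
        · exact h (by simpa [pr] using hpe ▸ he')
        · cases u'; cases u; exact he he'
  · intro v
    rw [show ∑ e', bk e₀ S y e' * incid (th ∘ pr e₀) (hd ∘ pr e₀) e' v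
        = ∑ e', bk e₀ S y e' * incid th hd (pr e₀ e') v from rfl,
      bk_sum_mul e₀ S y hy.1 (fun e => incid th hd e v)]
    exact hy.2 v

lemma rho_bk (γ : E → ℤ × ℤ) (e₀ : E) (S : Finset (E ⊕ Unit)) (y : E → ℤ)
    (hy : ∀ e ∉ S.image (pr e₀), y e = 0) :
    rho (γ ∘ pr e₀) (bk e₀ S y) = rho γ y := by
  unfold rho
  exact bk_sum e₀ S y hy γ

lemma rho_set_eq (th hd : E → V) (γ : E → ℤ × ℤ) (e₀ : E) (S : Finset (E ⊕ Unit)) :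
    rho (γ ∘ pr e₀) '' {x | IsCycle (th ∘ pr e₀) (hd ∘ pr e₀) S x}
      = rho γ '' {y | IsCycle th hd (S.image (pr e₀)) y} := by
  ext z
  constructor
  · rintro ⟨x, hx, rfl⟩
    exact ⟨fw e₀ x, isCycle_fw th hd e₀ S x hx, rho_fw γ e₀ x⟩
  · rintro ⟨y, hy, rfl⟩
    exact ⟨bk e₀ S y, isCycle_bk th hd e₀ S y hy, rho_bk γ e₀ S y hy.1⟩

lemma zrank_pr (th hd : E → V) (γ : E → ℤ × ℤ) (e₀ : E) (S : Finset (E ⊕ Unit)) :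
    zrank (th ∘ pr e₀) (hd ∘ pr e₀) (γ ∘ pr e₀) S = zrank th hd γ (S.image (pr e₀)) := by
  unfold zrank
  rw [rho_set_eq]

lemma verts_pr (th hd : E → V) (e₀ : E) (S : Finset (E ⊕ Unit)) :
    verts (th ∘ pr e₀) (hd ∘ pr e₀) S = verts th hd (S.image (pr e₀)) := by
  unfold verts
  rw [Finset.image_image, Finset.image_image]

lemma adjS_pr (th hd : E → V) (e₀ : E) (S : Finset (E ⊕ Unit)) :
    adjS (th ∘ pr e₀) (hd ∘ pr e₀) S = adjS th hd (S.image (pr e₀)) := by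
  funext u v
  apply propext
  constructor
  · rintro ⟨e', he', h⟩
    exact ⟨pr e₀ e', Finset.mem_image_of_mem _ he', h⟩
  · rintro ⟨e, he, h⟩
    rcases Finset.mem_image.mp he with ⟨e', he', rfl⟩
    exact ⟨e', he', h⟩

lemma ncomp_pr (th hd : E → V) (e₀ : E) (S : Finset (E ⊕ Unit)) :
    ncomp (th ∘ pr e₀) (hd ∘ pr e₀) S = ncomp th hd (S.image (pr e₀)) := by
  unfold ncomp
  rw [verts_pr, adjS_pr]

lemma card_le_pr (e₀ : E) (S : Finset (E ⊕ Unit)) :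
    (S.card : ℤ) ≤ ((S.image (pr e₀)).card : ℤ) + 1 := by
  have h1 : S ⊆ insert (Sum.inr ()) (S.erase (Sum.inr ())) := by
    intro a ha
    rcases eq_or_ne a (Sum.inr ()) with rfl | hne
    · exact Finset.mem_insert_self _ _
    · exact Finset.mem_insert_of_mem (Finset.mem_erase.mpr ⟨hne, ha⟩)
  have h2 : S.card ≤ (S.erase (Sum.inr ())).card + 1 := by
    calc S.card ≤ (insert (Sum.inr ()) (S.erase (Sum.inr ()))).card := Finset.card_le_card h1
    _ ≤ (S.erase (Sum.inr ())).card + 1 := Finset.card_insert_le _ _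
  have h3 : (S.erase (Sum.inr ())).card = ((S.erase (Sum.inr ())).image (pr e₀)).card := by
    rw [Finset.card_image_of_injOn]
    rintro (a | ua) ha (b | ub) hb hab
    · simpa [pr] using hab
    · exact absurd (by cases ub; rfl) (Finset.mem_erase.mp hb).1
    · exact absurd (by cases ua; rfl) (Finset.mem_erase.mp ha).1
    · exact absurd (by cases ua; rfl) (Finset.mem_erase.mp ha).1
  have h4 : ((S.erase (Sum.inr ())).image (pr e₀)).card ≤ (S.image (pr e₀)).card :=
    Finset.card_le_card (Finset.image_subset_image (Finset.erase_subset _ _))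
  omega

lemma ncomp_empty (th hd : E → V) : ncomp th hd (∅ : Finset E) = 0 := by
  have he : IsEmpty {v : V // v ∈ verts th hd (∅ : Finset E)} := by
    constructor
    rintro ⟨v, hv⟩
    simp [verts] at hv
  unfold ncomp
  haveI : IsEmpty (Quotient (Relation.EqvGen.setoid
      (fun a b : {v : V // v ∈ verts th hd (∅ : Finset E)} => adjS th hd ∅ a.1 b.1))) :=
    ⟨fun q => Quotient.inductionOn q fun a => he.elim a⟩
  exact Nat.card_of_isEmpty

end Aux2



/-- A colored graph with `n` vertices and `2n+1` edges is colored-Laman iff doubling any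
edge (adding a parallel copy with the same color, modeled on the edge type `E ⊕ Unit`)
yields a `(2,2,2)`-colored graph. -/
theorem statement12 {V E : Type} [Fintype V] [DecidableEq V] [Fintype E] [DecidableEq E]
    (th hd : E → V) (γ : E → ℤ × ℤ)
    (hm : (Fintype.card E : ℤ) = 2 * Fintype.card V + 1) :
    (∀ S : Finset E, S.Nonempty →
      (S.card : ℤ) ≤ 2 * ((verts th hd S).card : ℤ) - 3 + 2 * (zrank th hd γ S : ℤ)
        - 2 * ((ncomp th hd S : ℤ) - 1)) ↔
    (∀ e₀ : E,
      ((Fintype.card (E ⊕ Unit) : ℤ) = 2 * Fintype.card V + 2) ∧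
      ∀ S : Finset (E ⊕ Unit),
        (S.card : ℤ) ≤
          2 * ((verts (Sum.elim th fun _ => th e₀) (Sum.elim hd fun _ => hd e₀) S).card : ℤ)
            - 2
            + 2 * (zrank (Sum.elim th fun _ => th e₀) (Sum.elim hd fun _ => hd e₀)
                (Sum.elim γ fun _ => γ e₀) S : ℤ)
            - 2 * ((ncomp (Sum.elim th fun _ => th e₀) (Sum.elim hd fun _ => hd e₀) S : ℤ) - 1)) := by
  have hth : ∀ e₀ : E, (Sum.elim th fun _ => th e₀) = th ∘ pr e₀ := by
    intro e₀; funext e'; cases e' <;> rfl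
  have hhd : ∀ e₀ : E, (Sum.elim hd fun _ => hd e₀) = hd ∘ pr e₀ := by
    intro e₀; funext e'; cases e' <;> rfl
  have hγ : ∀ e₀ : E, (Sum.elim γ fun _ => γ e₀) = γ ∘ pr e₀ := by
    intro e₀; funext e'; cases e' <;> rfl
  constructor
  · intro hL e₀
    constructor
    · simp only [Fintype.card_sum, Fintype.card_unit]
      push_cast
      omega
    · intro S
      rw [hth e₀, hhd e₀, hγ e₀]
      rcases S.eq_empty_or_nonempty with rfl | hS
      · have hv : verts (th ∘ pr e₀) (hd ∘ pr e₀) (∅ : Finset (E ⊕ Unit)) = ∅ := by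
          simp [verts]
        rw [hv, ncomp_empty]
        have hz : (0:ℤ) ≤ (zrank (th ∘ pr e₀) (hd ∘ pr e₀) (γ ∘ pr e₀)
            (∅ : Finset (E ⊕ Unit)) : ℤ) := Int.natCast_nonneg _
        simp only [Finset.card_empty, Nat.cast_zero]
        linarith
      · have hT : (S.image (pr e₀)).Nonempty := hS.image _
        have hL' := hL (S.image (pr e₀)) hT
        rw [zrank_pr, verts_pr, ncomp_pr]
        have hc := card_le_pr e₀ S
        linarith
  · intro h S hS
    obtain ⟨e₀, he₀⟩ := hS
    have h22 := (h e₀).2 (S.image Sum.inl ∪ {Sum.inr ()})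
    rw [hth e₀, hhd e₀, hγ e₀] at h22
    have himg : (S.image Sum.inl ∪ {Sum.inr ()}).image (pr e₀) = S := by
      rw [Finset.image_union, Finset.image_image, Finset.image_singleton]
      have h1 : S.image (pr e₀ ∘ Sum.inl) = S := by
        rw [show pr e₀ ∘ Sum.inl = id from rfl, Finset.image_id]
      rw [h1, pr_inr]
      exact Finset.union_eq_left.mpr (Finset.singleton_subset_iff.mpr he₀)
    have hcard : ((S.image Sum.inl ∪ {Sum.inr ()} : Finset (E ⊕ Unit)).card : ℤ)
        = (S.card : ℤ) + 1 := by
      rw [Finset.card_union_of_disjoint, Finset.card_image_of_injective _ Sum.inl_injective,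
        Finset.card_singleton]
      · push_cast; ring
      · simp
    rw [zrank_pr, verts_pr, ncomp_pr, himg, hcard] at h22
    linarith
end

section
/- Let (G,γ) be a Z²-colored graph with n vertices and n edges whose Z²-rank is 1. Then (G,γ) is a (1,1,1)-graph (spanning tree plus one edge whose unique cycle C has ρ(C) = (t₁,t₂) ≠ (0,0)) if and only if the generic matrix M_{1,1,2}(G,γ) has rank n; moreover, the n×n minor obtained by keeping all vertex columns except one and the q-th extra column (q∈{1,2}) has determinant ± t_q ∏_{ij∈E} a_{ij}. -/
open Finset

open MvPolynomial in
/-- The entry of the generic matrix `M_{1,1,2}(G,γ)` in row `e` and a given column. -/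
noncomputable def Ment {V E : Type} [Fintype V] [DecidableEq V] [Fintype E] [DecidableEq E]
    (th hd : E → V) (γ : E → ℤ × ℤ) (e : E) : V ⊕ Fin 2 → MvPolynomial E ℚ
  | Sum.inl w => (if hd e = w then X e else 0) - (if th e = w then X e else 0)
  | Sum.inr q => (((if q = 0 then (γ e).1 else (γ e).2) : ℤ) : MvPolynomial E ℚ) * X e

namespace S15
open Matrix Module
set_option linter.unusedSectionVars false

variable {V E : Type} [Fintype V] [DecidableEq V] [Fintype E] [DecidableEq E]

/-- incidence matrix over ℚ -/
def Bq (th hd : E → V) : Matrix E V ℚ := Matrix.of fun e v => ((incid th hd e v : ℤ) : ℚ)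

noncomputable def dmap (th hd : E → V) : (V → ℚ) →ₗ[ℚ] (E → ℚ) := (Bq th hd).mulVecLin

noncomputable def bdry (th hd : E → V) : (E → ℚ) →ₗ[ℚ] (V → ℚ) := (Bq th hd)ᵀ.mulVecLin

noncomputable def Cyc (th hd : E → V) : Submodule ℚ (E → ℚ) := LinearMap.ker (bdry th hd)

lemma dmap_apply (th hd : E → V) (z : V → ℚ) (e : E) :
    dmap th hd z e = z (hd e) - z (th e) := by
  simp only [dmap, mulVecLin_apply, mulVec, dotProduct, Bq, incid, of_apply]
  push_cast
  simp only [sub_mul, Finset.sum_sub_distrib, ite_mul, one_mul, zero_mul]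
  rw [Finset.sum_ite_eq univ (hd e) z, Finset.sum_ite_eq univ (th e) z]
  simp

lemma bdry_apply (th hd : E → V) (x : E → ℚ) (v : V) :
    bdry th hd x v = ∑ e, x e * ((incid th hd e v : ℤ) : ℚ) := by
  simp only [bdry, mulVecLin_apply, mulVec, dotProduct, transpose_apply, Bq, of_apply]
  exact Finset.sum_congr rfl fun e _ => mul_comm _ _

lemma mem_Cyc_iff (th hd : E → V) (x : E → ℚ) :
    x ∈ Cyc th hd ↔ ∀ v, ∑ e, x e * ((incid th hd e v : ℤ) : ℚ) = 0 := by
  simp only [Cyc, LinearMap.mem_ker]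
  constructor
  · intro h v; rw [← bdry_apply]; rw [h]; rfl
  · intro h; funext v; rw [bdry_apply]; exact h v

lemma isCycle_univ_iff (th hd : E → V) (x : E → ℤ) :
    IsCycle th hd Finset.univ x ↔ (fun e => (x e : ℚ)) ∈ Cyc th hd := by
  rw [mem_Cyc_iff]
  constructor
  · rintro ⟨-, h⟩ v
    have := h v
    have : ((∑ e, x e * incid th hd e v : ℤ) : ℚ) = 0 := by rw [this]; simp
    push_cast at this
    exact this
  · intro h
    refine ⟨fun e he => absurd (Finset.mem_univ e) he, fun v => ?_⟩
    have := h v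
    have h2 : ((∑ e, x e * incid th hd e v : ℤ) : ℚ) = 0 := by push_cast; exact this
    exact_mod_cast h2

/-- the ℚ-linear color-sum map -/
noncomputable def rhoQ (γ : E → ℤ × ℤ) : (E → ℚ) →ₗ[ℚ] ℚ × ℚ where
  toFun := fun x => ∑ e, x e • q2 (γ e)
  map_add' := by
    intro a b; simp only [Pi.add_apply, add_smul, Finset.sum_add_distrib]
  map_smul' := by
    intro c a
    simp only [Pi.smul_apply, smul_eq_mul, RingHom.id_apply, Finset.smul_sum, ← smul_smul]

lemma rhoQ_intCast (γ : E → ℤ × ℤ) (x : E → ℤ) :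
    rhoQ γ (fun e => (x e : ℚ)) = q2 (rho γ x) := by
  simp only [rhoQ, LinearMap.coe_mk, AddHom.coe_mk, rho, q2]
  rw [Prod.ext_iff]
  constructor
  · simp only [Prod.fst_sum, Prod.smul_fst, smul_eq_mul]
    push_cast
    rfl
  · simp only [Prod.snd_sum, Prod.smul_snd, smul_eq_mul]
    push_cast
    rfl

lemma conn_ker_dmap_const {th hd : E → V} (hc : Conn th hd Finset.univ) {z : V → ℚ}
    (hz : dmap th hd z = 0) (u v : V) : z u = z v := by
  have key : ∀ a b : V, Relation.EqvGen (adjS th hd Finset.univ) a b → z a = z b := by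
    intro a b h
    induction h with
    | rel a b hab =>
      obtain ⟨e, -, h | h⟩ := hab
      · have := congrFun hz e
        rw [dmap_apply] at this
        simp only [Pi.zero_apply] at this
        rw [h.1, h.2] at this
        linarith
      · have := congrFun hz e
        rw [dmap_apply] at this
        simp only [Pi.zero_apply] at this
        rw [h.1, h.2] at this
        linarith
    | refl a => rfl
    | symm a b _ ih => exact ih.symm
    | trans a b c _ _ ih1 ih2 => exact ih1.trans ih2
  exact key u v (hc u v)

lemma finrank_Cyc_eq (th hd : E → V) (hcard : Fintype.card E = Fintype.card V) :
    finrank ℚ (Cyc th hd) = finrank ℚ (LinearMap.ker (dmap th hd)) := by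
  have h1 := LinearMap.finrank_range_add_finrank_ker (dmap th hd)
  have h2 := LinearMap.finrank_range_add_finrank_ker (bdry th hd)
  have h3 : (Bq th hd)ᵀ.rank = (Bq th hd).rank := Matrix.rank_transpose _
  have h4 : finrank ℚ (V → ℚ) = Fintype.card V := Module.finrank_pi ℚ
  have h5 : finrank ℚ (E → ℚ) = Fintype.card E := Module.finrank_pi ℚ
  have hr1 : finrank ℚ (LinearMap.range (dmap th hd)) = (Bq th hd).rank := rfl
  have hr2 : finrank ℚ (LinearMap.range (bdry th hd)) = (Bq th hd)ᵀ.rank := rfl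
  rw [h4] at h1; rw [h5] at h2
  rw [hr1] at h1; rw [hr2] at h2
  show finrank ℚ (LinearMap.ker (bdry th hd)) = _
  omega

lemma conn_finrank_Cyc_le_one {th hd : E → V} (hc : Conn th hd Finset.univ)
    (hcard : Fintype.card E = Fintype.card V) : finrank ℚ (Cyc th hd) ≤ 1 := by
  rw [finrank_Cyc_eq th hd hcard]
  rcases isEmpty_or_nonempty V with hV | hV
  · have : Fintype.card E = 0 := by rw [hcard]; exact Fintype.card_eq_zero
    haveI : IsEmpty E := Fintype.card_eq_zero_iff.mp this
    calc finrank ℚ (LinearMap.ker (dmap th hd)) ≤ finrank ℚ (V → ℚ) := Submodule.finrank_le _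
    _ = 0 := by rw [Module.finrank_pi ℚ]; exact Fintype.card_eq_zero
    _ ≤ 1 := by norm_num
  · obtain ⟨v₀⟩ := hV
    have hle : LinearMap.ker (dmap th hd) ≤ Submodule.span ℚ {(fun _ => 1 : V → ℚ)} := by
      intro z hz
      rw [Submodule.mem_span_singleton]
      refine ⟨z v₀, ?_⟩
      funext v
      simp only [Pi.smul_apply, smul_eq_mul, mul_one]
      exact (conn_ker_dmap_const hc (LinearMap.mem_ker.mp hz) v v₀).symm
    calc finrank ℚ (LinearMap.ker (dmap th hd))
        ≤ finrank ℚ (Submodule.span ℚ {(fun _ => 1 : V → ℚ)}) := Submodule.finrank_mono hle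
    _ = 1 := finrank_span_singleton (by
        intro h
        have := congrFun h v₀
        simp at this)

lemma notconn_two_le_finrank_Cyc {th hd : E → V} (hnc : ¬ Conn th hd Finset.univ)
    (hcard : Fintype.card E = Fintype.card V) : 2 ≤ finrank ℚ (Cyc th hd) := by
  classical
  rw [finrank_Cyc_eq th hd hcard]
  simp only [Conn, not_forall] at hnc
  obtain ⟨u, v, huv⟩ := hnc
  set Rel := Relation.EqvGen (adjS th hd (Finset.univ : Finset E)) with hRel
  have hedge : ∀ e : E, Rel (th e) (hd e) :=
    fun e => Relation.EqvGen.rel _ _ ⟨e, Finset.mem_univ e, Or.inl ⟨rfl, rfl⟩⟩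
  have hmem : ∀ w : V, (fun a => if Rel w a then (1:ℚ) else 0) ∈ LinearMap.ker (dmap th hd) := by
    intro w
    rw [LinearMap.mem_ker]
    funext e
    rw [dmap_apply]
    have : Rel w (hd e) ↔ Rel w (th e) :=
      ⟨fun h => h.trans _ _ _ ((hedge e).symm _ _), fun h => h.trans _ _ _ (hedge e)⟩
    simp only [Pi.zero_apply]
    by_cases h : Rel w (hd e)
    · rw [if_pos h, if_pos (this.mp h)]; ring
    · rw [if_neg h, if_neg (fun hh => h (this.mpr hh))]; ring
  set zu : ↥(LinearMap.ker (dmap th hd)) := ⟨_, hmem u⟩ with hzu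
  set zv : ↥(LinearMap.ker (dmap th hd)) := ⟨_, hmem v⟩ with hzv
  have hLI : LinearIndependent ℚ ![zu, zv] := by
    rw [linearIndependent_fin2]
    constructor
    · simp only [Matrix.cons_val_one, Matrix.head_cons]
      intro h
      have := congrArg (fun w : ↥(LinearMap.ker (dmap th hd)) => (w : V → ℚ) v) h
      simp only [hzv, Matrix.cons_val_zero] at this
      rw [if_pos (Relation.EqvGen.refl v)] at this
      simpa using this
    · intro a h
      have := congrArg (fun w : ↥(LinearMap.ker (dmap th hd)) => (w : V → ℚ) u) h
      simp only [Matrix.cons_val_one, Matrix.head_cons, Matrix.cons_val_zero, hzu, hzv,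
        SetLike.mk_smul_mk] at this
      simp only [Pi.smul_apply, smul_eq_mul] at this
      rw [if_neg (show ¬ Rel v u from fun hh => huv (Relation.EqvGen.symm _ _ hh))] at this
      rw [if_pos (show Rel u u from Relation.EqvGen.refl u)] at this
      norm_num at this
  have := hLI.fintype_card_le_finrank
  simpa using this

lemma rhoQ_mem_span {th hd : E → V} {γ : E → ℤ × ℤ} {y : E → ℚ} (hy : y ∈ Cyc th hd) :
    rhoQ γ y ∈ Submodule.span ℚ (q2 '' (rho γ '' {x | IsCycle th hd Finset.univ x})) := by
  classical
  set d : ℕ := ∏ e, (y e).den with hd'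
  have hden : ∀ e : E, (y e).den ∣ d := fun e => Finset.dvd_prod_of_mem _ (Finset.mem_univ e)
  have hd0 : (d : ℚ) ≠ 0 := by
    rw [hd']
    push_cast
    exact Finset.prod_ne_zero_iff.mpr fun e _ => Nat.cast_ne_zero.mpr (y e).den_nz
  set z : E → ℤ := fun e => (y e).num * ((d / (y e).den : ℕ) : ℤ) with hz
  have hzq : ∀ e, (z e : ℚ) = (d : ℚ) * y e := by
    intro e
    obtain ⟨k, hk⟩ := hden e
    have hkq : (d : ℚ) = ((y e).den : ℚ) * k := by exact_mod_cast congrArg (Nat.cast : ℕ → ℚ) hk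
    have hdiv : (d / (y e).den : ℕ) = k := by rw [hk]; exact Nat.mul_div_cancel_left k (y e).pos
    have hnd : ((y e).den : ℚ) * y e = ((y e).num : ℚ) := by
      rw [mul_comm]; exact_mod_cast Rat.mul_den_eq_num (y e)
    rw [hz]
    push_cast [hdiv]
    rw [hkq, mul_comm (((y e).den : ℚ)) ((k:ℚ)), mul_assoc, hnd]
    ring
  have hcz : (fun e => (z e : ℚ)) ∈ Cyc th hd := by
    rw [mem_Cyc_iff]
    intro v
    have := (mem_Cyc_iff th hd y).mp hy v
    calc ∑ e, (z e : ℚ) * ((incid th hd e v : ℤ) : ℚ)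
        = (d : ℚ) * ∑ e, y e * ((incid th hd e v : ℤ) : ℚ) := by
          rw [Finset.mul_sum]; exact Finset.sum_congr rfl fun e _ => by rw [hzq e]; ring
    _ = 0 := by rw [this, mul_zero]
  have hzc : IsCycle th hd Finset.univ z := (isCycle_univ_iff th hd z).mpr hcz
  have key : rhoQ γ y = (d : ℚ)⁻¹ • q2 (rho γ z) := by
    rw [← rhoQ_intCast]
    have : (fun e => (z e : ℚ)) = (d : ℚ) • y := by funext e; rw [hzq e]; rfl
    rw [this, LinearMap.map_smul, smul_smul, inv_mul_cancel₀ hd0, one_smul]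
  rw [key]
  exact Submodule.smul_mem _ _ (Submodule.subset_span ⟨rho γ z, ⟨z, hzc, rfl⟩, rfl⟩)

lemma exists_cycle_rho_ne_zero {th hd : E → V} {γ : E → ℤ × ℤ}
    (hrk : zrank th hd γ Finset.univ = 1) :
    ∃ y : E → ℤ, IsCycle th hd Finset.univ y ∧ q2 (rho γ y) ≠ 0 := by
  by_contra h
  push_neg at h
  have hsub : q2 '' (rho γ '' {x | IsCycle th hd Finset.univ x}) ⊆ {0} := by
    rintro p ⟨r, ⟨x, hx, rfl⟩, rfl⟩
    exact h x hx
  have : Submodule.span ℚ (q2 '' (rho γ '' {x | IsCycle th hd Finset.univ x})) = ⊥ := by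
    rw [← Submodule.span_zero_singleton (R := ℚ) (M := ℚ × ℚ)]
    apply le_antisymm
    · exact Submodule.span_mono hsub
    · rw [Submodule.span_zero_singleton]; exact bot_le
  rw [zrank, this] at hrk
  simp at hrk

lemma dep_of_finrank_le_one {M : Type} [AddCommGroup M] [Module ℚ M]
    (p : Submodule ℚ M) [FiniteDimensional ℚ M] (h1 : finrank ℚ p ≤ 1) {a b : M}
    (ha : a ∈ p) (hb : b ∈ p) (hbne : b ≠ 0) : ∃ c : ℚ, a = c • b := by
  by_contra hcon
  push_neg at hcon
  have hLI : LinearIndependent ℚ ![(⟨a, ha⟩ : ↥p), ⟨b, hb⟩] := by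
    rw [linearIndependent_fin2]
    constructor
    · simp only [Matrix.cons_val_one, Matrix.head_cons]
      intro h
      apply hbne
      exact congrArg Subtype.val h
    · intro c h
      simp only [Matrix.cons_val_one, Matrix.head_cons, Matrix.cons_val_zero] at h
      have : c • b = a := congrArg Subtype.val h
      exact hcon c this.symm
  have := hLI.fintype_card_le_finrank
  simp at this
  omega
section RankAux
open Matrix Module nonZeroDivisors

lemma card_le_rank_of_indep {R m c : Type} [CommRing R] [Nontrivial R] [StrongRankCondition R]
    [Fintype m] [Fintype c] [DecidableEq m]
    (A : Matrix m c R) (w : m → (m → R)) (hw : LinearIndependent R w)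
    (hmem : ∀ i, w i ∈ LinearMap.range A.mulVecLin) :
    Fintype.card m ≤ A.rank := by
  haveI : Module.Finite R (m → R) := Module.Finite.pi
  set P := LinearMap.range A.mulVecLin with hP
  have hw' : LinearIndependent R (fun i => (⟨w i, hmem i⟩ : ↥P)) := by
    apply LinearIndependent.of_comp P.subtype
    have : (P.subtype ∘ fun i => (⟨w i, hmem i⟩ : ↥P)) = w := by funext i; rfl
    rw [this]
    exact hw
  have hcard : (Fintype.card m : Cardinal) ≤ Module.rank R ↥P := by
    simpa using hw'.cardinal_le_rank
  have hfin : Module.rank R ↥P < Cardinal.aleph0 :=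
    lt_of_le_of_lt (Submodule.rank_le P) (Module.rank_lt_aleph0 R (m → R))
  have h2 := Cardinal.toNat_le_toNat hcard hfin
  simpa [Matrix.rank, Module.finrank] using h2

lemma rank_le_finrank_subspace {R : Type} [CommRing R] [IsDomain R] {m c : Type}
    [Fintype m] [Fintype c] [DecidableEq m] [DecidableEq c]
    (A : Matrix m c R) (W : Submodule (FractionRing R) (m → FractionRing R))
    (hcol : ∀ j, (fun e => algebraMap R (FractionRing R) (A e j)) ∈ W) :
    A.rank ≤ Module.finrank (FractionRing R) W := by
  classical
  set K := FractionRing R with hK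
  set ι : (m → R) →ₗ[R] (m → K) := (Algebra.linearMap R K).compLeft m with hι'
  have hι : Function.Injective ι := by
    intro a b hab
    funext i
    exact IsFractionRing.injective R K (congrFun hab i)
  have hmemW : ∀ y ∈ LinearMap.range A.mulVecLin, ι y ∈ W := by
    rintro y ⟨v, rfl⟩
    have heq : ι (A.mulVecLin v)
        = ∑ j, algebraMap R K (v j) • (fun e => algebraMap R K (A e j)) := by
      funext e
      have h0 : ι (A.mulVecLin v) e = algebraMap R K (∑ j, A e j * v j) := rfl
      rw [h0, map_sum, Finset.sum_apply]
      refine Finset.sum_congr rfl fun j _ => ?_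
      rw [Pi.smul_apply, smul_eq_mul, RingHom.map_mul, mul_comm]
    rw [heq]
    exact Submodule.sum_mem _ fun j _ => Submodule.smul_mem _ _ (hcol j)
  set P := LinearMap.range A.mulVecLin with hP
  show Module.finrank R ↥P ≤ Module.finrank K ↥W
  have hb : Module.rank R ↥P ≤ (Module.finrank K ↥W : Cardinal) := by
    rw [Module.rank_def]
    apply ciSup_le'
    rintro ⟨s, hs⟩
    have h1 : LinearIndependent R (fun a : s => ((a : ↥P) : m → R)) :=
      hs.map' P.subtype (Submodule.ker_subtype P)
    have h2 : LinearIndependent R (fun a : s => ι ((a : ↥P) : m → R)) := by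
      have := h1.map' ι (LinearMap.ker_eq_bot.mpr hι)
      exact this
    have h3 : LinearIndependent K (fun a : s => ι ((a : ↥P) : m → R)) :=
      h2.localization K R⁰
    have h4 : LinearIndependent K
        (fun a : s => (⟨ι ((a : ↥P) : m → R), hmemW _ (a : ↥P).2⟩ : ↥W)) := by
      apply LinearIndependent.of_comp W.subtype
      have : (W.subtype ∘ fun a : s => (⟨ι ((a : ↥P) : m → R), hmemW _ (a : ↥P).2⟩ : ↥W))
          = fun a : s => ι ((a : ↥P) : m → R) := by funext a; rfl
      rw [this]
      exact h3
    have h5 := h4.cardinal_le_rank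
    rwa [← Module.finrank_eq_rank K ↥W] at h5
  have h6 := Cardinal.toNat_le_toNat hb (Cardinal.nat_lt_aleph0 _)
  simpa [Module.finrank] using h6

end RankAux
section Part1
open Matrix Module
variable {V E : Type} [Fintype V] [DecidableEq V] [Fintype E] [DecidableEq E]

def Nq (th hd : E → V) (γ : E → ℤ × ℤ) : Matrix E (V ⊕ Fin 2) ℚ :=
  Matrix.of fun e c => Sum.elim (fun v => ((incid th hd e v : ℤ) : ℚ))
    (fun q : Fin 2 => (((if q = 0 then (γ e).1 else (γ e).2) : ℤ) : ℚ)) c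

lemma rhoQ_fst (γ : E → ℤ × ℤ) (x : E → ℚ) :
    (rhoQ γ x).1 = ∑ e, x e * ((γ e).1 : ℚ) := by
  simp only [rhoQ, LinearMap.coe_mk, AddHom.coe_mk, Prod.fst_sum, Prod.smul_fst, q2, smul_eq_mul]

lemma rhoQ_snd (γ : E → ℤ × ℤ) (x : E → ℚ) :
    (rhoQ γ x).2 = ∑ e, x e * ((γ e).2 : ℚ) := by
  simp only [rhoQ, LinearMap.coe_mk, AddHom.coe_mk, Prod.snd_sum, Prod.smul_snd, q2, smul_eq_mul]

lemma mem_ker_NqT (th hd : E → V) (γ : E → ℤ × ℤ) (x : E → ℚ) :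
    x ∈ LinearMap.ker ((Nq th hd γ)ᵀ.mulVecLin) ↔ x ∈ Cyc th hd ∧ rhoQ γ x = 0 := by
  rw [LinearMap.mem_ker]
  have happ : ∀ c, ((Nq th hd γ)ᵀ.mulVecLin x) c = ∑ e, x e * Nq th hd γ e c := by
    intro c
    simp only [mulVecLin_apply, mulVec, dotProduct, transpose_apply]
    exact Finset.sum_congr rfl fun e _ => mul_comm _ _
  constructor
  · intro h
    have hc : ∀ c, ∑ e, x e * Nq th hd γ e c = 0 := by
      intro c; rw [← happ c, h]; rfl
    refine ⟨(mem_Cyc_iff th hd x).mpr fun v => ?_, ?_⟩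
    · exact hc (Sum.inl v)
    · have h1 := hc (Sum.inr 0)
      have h2 := hc (Sum.inr 1)
      simp only [Nq, Matrix.of_apply, Sum.elim_inr, if_pos rfl] at h1
      have h2' : ∑ e, x e * ((γ e).2 : ℚ) = 0 := by
        simpa only [Nq, Matrix.of_apply, Sum.elim_inr, if_neg (by norm_num : (1 : Fin 2) ≠ 0)]
          using h2
      rw [Prod.ext_iff, rhoQ_fst, rhoQ_snd]
      constructor
      · simpa using h1
      · simpa using h2'
  · rintro ⟨hcyc, hrho⟩
    funext c
    rw [happ c]
    cases c with
    | inl v =>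
      simpa only [Nq, Matrix.of_apply, Sum.elim_inl, Pi.zero_apply] using (mem_Cyc_iff th hd x).mp hcyc v
    | inr q =>
      rw [Prod.ext_iff, rhoQ_fst, rhoQ_snd] at hrho
      fin_cases q
      · simpa [Nq] using hrho.1
      · simpa [Nq] using hrho.2

lemma Ment_eq (th hd : E → V) (γ : E → ℤ × ℤ) (e : E) (c : V ⊕ Fin 2) :
    Ment th hd γ e c = MvPolynomial.X e * MvPolynomial.C (Nq th hd γ e c) := by
  cases c with
  | inl w =>
    show (if hd e = w then MvPolynomial.X e else 0) - (if th e = w then MvPolynomial.X e else 0)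
      = _
    simp only [Nq, Matrix.of_apply, Sum.elim_inl, incid]
    split_ifs <;> push_cast <;> simp
  | inr q =>
    show (((if q = 0 then (γ e).1 else (γ e).2) : ℤ) : MvPolynomial E ℚ) * MvPolynomial.X e = _
    simp only [Nq, Matrix.of_apply, Sum.elim_inr]
    rw [← map_intCast (MvPolynomial.C : ℚ →+* MvPolynomial E ℚ), map_intCast]
    ring

lemma M_factor (th hd : E → V) (γ : E → ℤ × ℤ) :
    (Matrix.of fun (e : E) (c : V ⊕ Fin 2) => Ment th hd γ e c)
      = Matrix.diagonal (fun e => (MvPolynomial.X e : MvPolynomial E ℚ))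
        * (Nq th hd γ).map (MvPolynomial.C : ℚ →+* MvPolynomial E ℚ) := by
  ext e c
  rw [Matrix.diagonal_mul, Matrix.of_apply, Ment_eq]
  rfl

lemma rank_eq_card_of_ker_bot (th hd : E → V) (γ : E → ℤ × ℤ)
    (hcard : Fintype.card E = Fintype.card V)
    (hker : LinearMap.ker ((Nq th hd γ)ᵀ.mulVecLin) = ⊥) :
    (Matrix.of fun (e : E) (c : V ⊕ Fin 2) => Ment th hd γ e c).rank = Fintype.card V := by
  classical
  have hrankT : ((Nq th hd γ)ᵀ).rank = Fintype.card E := by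
    have h := LinearMap.finrank_range_add_finrank_ker ((Nq th hd γ)ᵀ.mulVecLin)
    rw [hker, Module.finrank_pi] at h
    simpa [Matrix.rank] using h
  have hrank : (Nq th hd γ).rank = Fintype.card E := by
    rw [← Matrix.rank_transpose]; exact hrankT
  have hsurj : Function.Surjective ((Nq th hd γ).mulVecLin) := by
    rw [← LinearMap.range_eq_top]
    apply Submodule.eq_top_of_finrank_eq
    rw [Module.finrank_pi]
    exact hrank
  choose Rr hRr using fun e : E => hsurj (Pi.single e 1)
  set Rq : Matrix (V ⊕ Fin 2) E ℚ := Matrix.of fun c e => Rr e c with hRq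
  have hNR : Nq th hd γ * Rq = 1 := by
    ext e' e
    have h := congrFun (hRr e) e'
    simp only [mulVecLin_apply] at h
    rw [Matrix.mul_apply, Matrix.one_apply]
    simp only [hRq, Matrix.of_apply]
    rw [show ∑ c, Nq th hd γ e' c * Rr e c = (Nq th hd γ *ᵥ Rr e) e' from rfl, h,
      Pi.single_apply]
  set R := MvPolynomial E ℚ
  set M := Matrix.of fun (e : E) (c : V ⊕ Fin 2) => Ment th hd γ e c with hM
  set RqC := Rq.map (MvPolynomial.C : ℚ →+* MvPolynomial E ℚ) with hRqC
  have hMR : M * RqC = Matrix.diagonal (fun e => (MvPolynomial.X e : R)) := by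
    rw [hM, M_factor th hd γ, Matrix.mul_assoc, hRqC, ← Matrix.map_mul, hNR]
    rw [Matrix.map_one _ (map_zero _) (map_one _), Matrix.mul_one]
  have hle : M.rank ≤ Fintype.card E := Matrix.rank_le_card_height M
  have hge : Fintype.card E ≤ M.rank := by
    apply card_le_rank_of_indep M (fun i => Pi.single i (MvPolynomial.X i))
    · rw [Fintype.linearIndependent_iff]
      intro g hg i
      have := congrFun hg i
      simp only [Finset.sum_apply, Pi.smul_apply, Pi.single_apply, smul_eq_mul,
        mul_ite, mul_zero, Finset.sum_ite_eq, Finset.mem_univ, if_pos, Pi.zero_apply] at this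
      rcases mul_eq_zero.mp this with h | h
      · exact h
      · exact absurd h (MvPolynomial.X_ne_zero i)
    · intro i
      refine ⟨RqC.mulVec (Pi.single i 1), ?_⟩
      rw [mulVecLin_apply, Matrix.mulVec_mulVec, hMR]
      funext j
      rw [Matrix.mulVec_diagonal]
      by_cases h : j = i
      · subst h; simp [Pi.single_apply]
      · simp [Pi.single_apply, h]
  omega

end Part1
section Part1b
open Matrix Module MvPolynomial
variable {V E : Type} [Fintype V] [DecidableEq V] [Fintype E] [DecidableEq E]

lemma rank_ne_of_ker_ne_bot (th hd : E → V) (γ : E → ℤ × ℤ)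
    (hcard : Fintype.card E = Fintype.card V) (hV : Nonempty V)
    {x : E → ℚ} (hx0 : x ≠ 0) (hx : ((Nq th hd γ)ᵀ).mulVecLin x = 0) :
    (Matrix.of fun (e : E) (c : V ⊕ Fin 2) => Ment th hd γ e c).rank ≠ Fintype.card V := by
  classical
  set R := MvPolynomial E ℚ with hR
  set K := FractionRing R with hK
  set coef : E → R := fun e => C (x e) * ∏ e' ∈ Finset.univ.erase e, X e' with hcoef
  set φ : (E → K) →ₗ[K] K :=
    { toFun := fun u => ∑ e, algebraMap R K (coef e) * u e
      map_add' := by intro a b; simp [Pi.add_apply, mul_add, Finset.sum_add_distrib]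
      map_smul' := by
        intro m a
        simp only [Pi.smul_apply, smul_eq_mul, RingHom.id_apply, Finset.mul_sum]
        exact (Finset.sum_congr rfl fun e _ => mul_left_comm _ _ _).trans (Finset.mul_sum _ _ _).symm } with hφ
  have hterm : ∀ (c : V ⊕ Fin 2) (e : E), coef e * Ment th hd γ e c
      = C (x e * Nq th hd γ e c) * ∏ e', X e' := by
    intro c e
    calc coef e * Ment th hd γ e c
        = C (x e) * C (Nq th hd γ e c) * ((∏ e' ∈ Finset.univ.erase e, X e') * X e) := by
          rw [Ment_eq]; simp only [hcoef]; ring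
      _ = C (x e * Nq th hd γ e c) * ∏ e', X e' := by
          rw [Finset.prod_erase_mul _ _ (Finset.mem_univ e), ← C_mul]
  have hcol : ∀ c, (fun e => algebraMap R K ((Matrix.of fun (e : E) (c : V ⊕ Fin 2) =>
      Ment th hd γ e c) e c)) ∈ LinearMap.ker φ := by
    intro c
    rw [LinearMap.mem_ker]
    show ∑ e, algebraMap R K (coef e) * algebraMap R K (Ment th hd γ e c) = 0
    have hsum : ∑ e, algebraMap R K (coef e) * algebraMap R K (Ment th hd γ e c)
        = algebraMap R K (∑ e, coef e * Ment th hd γ e c) := by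
      rw [map_sum]
      exact Finset.sum_congr rfl fun e _ => (RingHom.map_mul _ _ _).symm
    rw [hsum]
    have h3 : ∑ e, x e * Nq th hd γ e c = 0 := by
      have h4 := congrFun hx c
      simp only [mulVecLin_apply, mulVec, dotProduct, transpose_apply, Pi.zero_apply] at h4
      rw [← h4]
      exact Finset.sum_congr rfl fun e _ => mul_comm _ _
    have h2 : ∑ e, coef e * Ment th hd γ e c = 0 := by
      rw [Finset.sum_congr rfl (fun e _ => hterm c e), ← Finset.sum_mul, ← map_sum, h3]
      simp
    rw [h2, map_zero]
  obtain ⟨e₀, he₀⟩ : ∃ e₀, x e₀ ≠ 0 := by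
    by_contra h; push_neg at h; exact hx0 (funext h)
  have hc0 : coef e₀ ≠ 0 := by
    apply mul_ne_zero
    · intro h
      apply he₀
      simpa using h
    · exact Finset.prod_ne_zero_iff.mpr fun e _ => X_ne_zero e
  have hφne : φ (Pi.single e₀ (1 : K)) ≠ 0 := by
    have heval : φ (Pi.single e₀ (1 : K)) = algebraMap R K (coef e₀) := by
      have hφap : φ (Pi.single e₀ (1 : K))
          = ∑ e, algebraMap R K (coef e) * (Pi.single e₀ (1 : K) : E → K) e := rfl
      rw [hφap, Finset.sum_eq_single e₀]
      · simp
      · intro e _ hne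
        rw [Pi.single_apply, if_neg (by exact fun h => hne h), mul_zero]
      · intro h; exact absurd (Finset.mem_univ e₀) h
    rw [heval]
    intro h
    apply hc0
    apply IsFractionRing.injective R K
    rw [h, map_zero]
  have hkerrank : finrank K (LinearMap.ker φ) + 1 = Fintype.card E := by
    have hr := LinearMap.finrank_range_add_finrank_ker φ
    rw [Module.finrank_pi] at hr
    have hrange : LinearMap.range φ = ⊤ := by
      rw [eq_top_iff]
      rintro k -
      refine ⟨(k / φ (Pi.single e₀ 1)) • Pi.single e₀ 1, ?_⟩
      rw [LinearMap.map_smul, smul_eq_mul, div_mul_cancel₀ _ hφne]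
    rw [hrange, finrank_top, Module.finrank_self] at hr
    omega
  have hle := rank_le_finrank_subspace
    (Matrix.of fun (e : E) (c : V ⊕ Fin 2) => Ment th hd γ e c) (LinearMap.ker φ) hcol
  have hVpos : 0 < Fintype.card V := Fintype.card_pos_iff.mpr hV
  have hle' : (Matrix.of fun (e : E) (c : V ⊕ Fin 2) => Ment th hd γ e c).rank
      ≤ finrank K (LinearMap.ker φ) := hle
  omega

lemma part1 (th hd : E → V) (γ : E → ℤ × ℤ)
    (hcard : Fintype.card E = Fintype.card V) (hrk : zrank th hd γ Finset.univ = 1) :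
    ((Conn th hd Finset.univ ∧ zrank th hd γ Finset.univ = 1) ↔
      (Matrix.of fun (e : E) (c : V ⊕ Fin 2) => Ment th hd γ e c).rank = Fintype.card V) := by
  classical
  obtain ⟨y, hy, hyne⟩ := exists_cycle_rho_ne_zero hrk
  have hyQ : (fun e => (y e : ℚ)) ∈ Cyc th hd := (isCycle_univ_iff th hd y).mp hy
  have hyQne : (fun e => (y e : ℚ)) ≠ 0 := by
    intro h
    apply hyne
    rw [← rhoQ_intCast γ y, h, map_zero]
  have hyne0 : y ≠ 0 := by
    intro h
    apply hyQne
    funext e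
    rw [h]
    simp
  have hEne : Nonempty E := by
    by_contra hE
    apply hyne0
    funext e
    exact absurd (Nonempty.intro e) hE
  have hV : Nonempty V := by
    rw [← Fintype.card_pos_iff] at hEne ⊢
    omega
  constructor
  · rintro ⟨hconn, -⟩
    apply rank_eq_card_of_ker_bot th hd γ hcard
    rw [eq_bot_iff]
    intro x hxk
    obtain ⟨hxc, hxr⟩ := (mem_ker_NqT th hd γ x).mp hxk
    obtain ⟨cc, hc⟩ := dep_of_finrank_le_one (Cyc th hd)
      (conn_finrank_Cyc_le_one hconn hcard) hxc hyQ hyQne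
    have hsm : rhoQ γ x = cc • q2 (rho γ y) := by
      rw [hc, LinearMap.map_smul, rhoQ_intCast]
    rw [hxr] at hsm
    have hcc : cc = 0 := by
      rcases smul_eq_zero.mp hsm.symm with h | h
      · exact h
      · exact absurd h hyne
    rw [Submodule.mem_bot, hc, hcc, zero_smul]
  · intro hr
    refine ⟨?_, hrk⟩
    by_contra hnc
    have h2 : 2 ≤ finrank ℚ (Cyc th hd) := notconn_two_le_finrank_Cyc hnc hcard
    set W := Submodule.span ℚ (q2 '' (rho γ '' {x | IsCycle th hd Finset.univ x})) with hW
    have hWrank : finrank ℚ W = 1 := hrk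
    set ρ' : ↥(Cyc th hd) →ₗ[ℚ] ↥W :=
      LinearMap.codRestrict W ((rhoQ γ).comp (Cyc th hd).subtype)
        (fun c => rhoQ_mem_span c.2) with hρ'
    have hkerne : LinearMap.ker ρ' ≠ ⊥ := by
      intro hk
      have hrn := LinearMap.finrank_range_add_finrank_ker ρ'
      rw [hk, finrank_bot] at hrn
      have hrle : finrank ℚ (LinearMap.range ρ') ≤ finrank ℚ W := Submodule.finrank_le _
      omega
    obtain ⟨z, hzk, hzne⟩ := (Submodule.ne_bot_iff _).mp hkerne
    have hzr : rhoQ γ (z : E → ℚ) = 0 := by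
      rw [LinearMap.mem_ker] at hzk
      have := congrArg Subtype.val hzk
      simpa [hρ'] using this
    have hzQne : (z : E → ℚ) ≠ 0 := fun h => hzne (Subtype.ext h)
    have hk : ((Nq th hd γ)ᵀ).mulVecLin (z : E → ℚ) = 0 :=
      LinearMap.mem_ker.mp ((mem_ker_NqT th hd γ (z : E → ℚ)).mpr ⟨z.2, hzr⟩)
    exact rank_ne_of_ker_ne_bot th hd γ hcard hV hzQne hk hr

end Part1b
section Gen
open Matrix Module
variable {V E : Type} [Fintype V] [DecidableEq V] [Fintype E] [DecidableEq E]

lemma bezout_finset (s : Finset E) (f : E → ℤ) :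
    ∃ β : E → ℤ, ∑ e ∈ s, β e * f e = s.gcd f := by
  classical
  induction s using Finset.induction_on with
  | empty => exact ⟨0, by simp⟩
  | insert a s ha ih =>
    obtain ⟨β, hβ⟩ := ih
    refine ⟨fun e => if e = a then Int.gcdA (f a) (s.gcd f)
      else β e * Int.gcdB (f a) (s.gcd f), ?_⟩
    rw [Finset.sum_insert ha, Finset.gcd_insert]
    have hcg : ∀ e ∈ s, (if e = a then Int.gcdA (f a) (s.gcd f)
        else β e * Int.gcdB (f a) (s.gcd f)) * f e = (β e * f e) * Int.gcdB (f a) (s.gcd f) := by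
      intro e he
      rw [if_neg (fun h => ha (by rw [← h]; exact he))]; ring
    rw [Finset.sum_congr rfl hcg, ← Finset.sum_mul, hβ]
    have hba : (fun e => if e = a then Int.gcdA (f a) (s.gcd f)
        else β e * Int.gcdB (f a) (s.gcd f)) a = Int.gcdA (f a) (s.gcd f) := by simp
    rw [hba]
    have hcoe : GCDMonoid.gcd (f a) (s.gcd f) = ((Int.gcd (f a) (s.gcd f) : ℤ)) :=
      (Int.coe_gcd _ _).symm
    rw [hcoe, Int.gcd_eq_gcd_ab]
    ring

lemma rho_mul (γ : E → ℤ × ℤ) (m : ℤ) (x : E → ℤ) :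
    rho γ (fun e => m * x e) = m • rho γ x := by
  rw [rho, rho, Finset.smul_sum]
  exact Finset.sum_congr rfl fun e _ => mul_smul m (x e) (γ e)

lemma exists_generator {th hd : E → V} {γ : E → ℤ × ℤ} (hconn : Conn th hd Finset.univ)
    (hcard : Fintype.card E = Fintype.card V) (hrk : zrank th hd γ Finset.univ = 1) :
    ∃ x : E → ℤ, IsCycle th hd Finset.univ x ∧ rho γ x ≠ 0 ∧
      Finset.gcd Finset.univ x = 1 ∧
      (∀ z : E → ℤ, IsCycle th hd Finset.univ z → ∃ m : ℤ, ∀ e, z e = m * x e) := by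
  classical
  obtain ⟨y, hy, hyne⟩ := exists_cycle_rho_ne_zero hrk
  have hrhoy : rho γ y ≠ 0 := by
    intro h
    apply hyne
    rw [h]
    simp [q2]
  have hy0 : y ≠ 0 := by
    intro h
    apply hrhoy
    rw [h]
    simp [rho]
  set g : ℤ := Finset.gcd Finset.univ y with hg
  have hg0 : g ≠ 0 := by
    rw [hg, Ne, Finset.gcd_eq_zero_iff]
    intro h
    exact hy0 (funext fun e => h e (Finset.mem_univ e))
  set x : E → ℤ := fun e => y e / g with hx
  have hyx : ∀ e, y e = g * x e := fun e =>
    (Int.mul_ediv_cancel' (Finset.gcd_dvd (Finset.mem_univ e))).symm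
  have hxc : IsCycle th hd Finset.univ x := by
    refine ⟨fun e he => absurd (Finset.mem_univ e) he, fun v => ?_⟩
    have h1 := hy.2 v
    have h2 : ∑ e, y e * incid th hd e v = g * ∑ e, x e * incid th hd e v := by
      rw [Finset.mul_sum]
      exact Finset.sum_congr rfl fun e _ => by rw [hyx e]; ring
    rw [h2] at h1
    exact (mul_eq_zero.mp h1).resolve_left hg0
  have hrxy : rho γ y = g • rho γ x := by
    have : y = fun e => g * x e := funext hyx
    rw [this, rho_mul]
  have hrx : rho γ x ≠ 0 := by
    intro h
    apply hrhoy
    rw [hrxy, h, smul_zero]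
  have hgcdx : Finset.gcd Finset.univ x = 1 := by
    have h1 : g = Finset.gcd Finset.univ (fun e => g * x e) :=
      Finset.gcd_congr rfl fun e _ => hyx e
    rw [Finset.gcd_mul_left] at h1
    have hnorm : (normalize g : ℤ) = g := by
      rw [hg]
      exact Finset.normalize_gcd
    rw [hnorm] at h1
    have := mul_left_cancel₀ hg0 (by rw [← h1, mul_one] : g * 1 = g * Finset.gcd Finset.univ x)
    exact this.symm
  have hx0 : x ≠ 0 := by
    intro h
    apply hrx
    rw [h]
    simp [rho]
  have hxQ : (fun e => (x e : ℚ)) ∈ Cyc th hd := (isCycle_univ_iff th hd x).mp hxc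
  have hxQne : (fun e => (x e : ℚ)) ≠ 0 := by
    intro h
    apply hx0
    funext e
    have h2 : (x e : ℚ) = 0 := by simpa using congrFun h e
    exact_mod_cast h2
  obtain ⟨β, hβ⟩ := bezout_finset (Finset.univ : Finset E) x
  rw [hgcdx] at hβ
  refine ⟨x, hxc, hrx, hgcdx, ?_⟩
  intro z hz
  have hzQ : (fun e => (z e : ℚ)) ∈ Cyc th hd := (isCycle_univ_iff th hd z).mp hz
  obtain ⟨c, hc⟩ := dep_of_finrank_le_one (Cyc th hd)
    (conn_finrank_Cyc_le_one hconn hcard) hzQ hxQ hxQne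
  refine ⟨∑ e, β e * z e, fun e => ?_⟩
  have hce : ∀ e, (z e : ℚ) = c * (x e : ℚ) := by
    intro e
    have := congrFun hc e
    simpa using this
  have hmc : ((∑ e, β e * z e : ℤ) : ℚ) = c := by
    push_cast
    calc ∑ e, (β e : ℚ) * (z e : ℚ) = ∑ e, (β e : ℚ) * (c * (x e : ℚ)) := by
          exact Finset.sum_congr rfl fun e _ => by rw [hce e]
    _ = c * ∑ e, (β e : ℚ) * (x e : ℚ) := by rw [Finset.mul_sum]; exact Finset.sum_congr rfl fun e _ => by ring
    _ = c * ((∑ e, β e * x e : ℤ) : ℚ) := by push_cast; ring_nf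
    _ = c := by rw [hβ]; push_cast; ring
  have hfin : (z e : ℚ) = ((∑ e, β e * z e : ℤ) : ℚ) * ((x e : ℤ) : ℚ) := by
    rw [hmc, hce e]
  exact_mod_cast hfin

end Gen
section TU
open Matrix

def RowOK {I : Type} (r : I → ℤ) : Prop :=
  (∀ j, r j = 0 ∨ r j = 1 ∨ r j = -1) ∧
  (∀ j j', r j = 1 → r j' = 1 → j = j') ∧
  (∀ j j', r j = -1 → r j' = -1 → j = j')

lemma rowOK_comp {I J : Type} {r : I → ℤ} (h : RowOK r) {u : J → I}
    (hu : Function.Injective u) : RowOK (r ∘ u) :=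
  ⟨fun j => h.1 (u j), fun j j' h1 h2 => hu (h.2.1 _ _ h1 h2),
    fun j j' h1 h2 => hu (h.2.2 _ _ h1 h2)⟩

lemma tu_fin : ∀ n (A : Matrix (Fin n) (Fin n) ℤ), (∀ i, RowOK (A i)) →
    A.det = 0 ∨ A.det = 1 ∨ A.det = -1 := by
  intro n
  induction n with
  | zero => intro A _; right; left; exact Matrix.det_fin_zero
  | succ n ih =>
    intro A hA
    by_cases hs : ∃ i, ∑ j, A i j ≠ 0
    · obtain ⟨i, hi⟩ := hs
      have hjex : ∃ j₀, (A i j₀ = 1 ∨ A i j₀ = -1) ∧ ∀ j, j ≠ j₀ → A i j = 0 := by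
        by_cases h1 : ∃ j, A i j = 1
        · obtain ⟨j1, hj1⟩ := h1
          by_cases hm : ∃ j, A i j = -1
          · obtain ⟨jm, hjm⟩ := hm
            exfalso
            apply hi
            have hne : jm ≠ j1 := by intro h; rw [h, hj1] at hjm; norm_num at hjm
            have hmem : jm ∈ Finset.univ.erase j1 :=
              Finset.mem_erase.mpr ⟨hne, Finset.mem_univ _⟩
            rw [← Finset.add_sum_erase _ _ (Finset.mem_univ j1),
              ← Finset.add_sum_erase _ _ hmem]
            have hrest : ∑ j ∈ (Finset.univ.erase j1).erase jm, A i j = 0 := by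
              apply Finset.sum_eq_zero
              intro j hj
              obtain hj2 := Finset.mem_erase.mp hj
              obtain hj3 := Finset.mem_erase.mp hj2.2
              rcases (hA i).1 j with h | h | h
              · exact h
              · exact absurd ((hA i).2.1 _ _ h hj1) hj3.1
              · exact absurd ((hA i).2.2 _ _ h hjm) hj2.1
            rw [hrest, hj1, hjm]; ring
          · push_neg at hm
            refine ⟨j1, Or.inl hj1, fun j hj => ?_⟩
            rcases (hA i).1 j with h | h | h
            · exact h
            · exact absurd ((hA i).2.1 _ _ h hj1) hj
            · exact absurd h (hm j)
        · push_neg at h1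
          by_cases hm : ∃ j, A i j = -1
          · obtain ⟨jm, hjm⟩ := hm
            refine ⟨jm, Or.inr hjm, fun j hj => ?_⟩
            rcases (hA i).1 j with h | h | h
            · exact h
            · exact absurd h (h1 j)
            · exact absurd ((hA i).2.2 _ _ h hjm) hj
          · push_neg at hm
            exfalso
            apply hi
            apply Finset.sum_eq_zero
            intro j _
            rcases (hA i).1 j with h | h | h
            · exact h
            · exact absurd h (h1 j)
            · exact absurd h (hm j)
      obtain ⟨j₀, hj₀v, hj₀z⟩ := hjex
      rw [Matrix.det_succ_row A i, Finset.sum_eq_single j₀]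
      · have hminor := ih (A.submatrix i.succAbove j₀.succAbove)
          (fun i' => rowOK_comp (hA (i.succAbove i')) (Fin.succAbove_right_injective))
        rcases Nat.even_or_odd ((i : ℕ) + (j₀ : ℕ)) with hp | hp
        · rw [hp.neg_one_pow]
          rcases hj₀v with h | h <;> rw [h] <;>
            rcases hminor with h2 | h2 | h2 <;> rw [h2] <;> norm_num
        · rw [hp.neg_one_pow]
          rcases hj₀v with h | h <;> rw [h] <;>
            rcases hminor with h2 | h2 | h2 <;> rw [h2] <;> norm_num
      · intro j _ hj
        rw [hj₀z j hj]; ring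
      · intro h
        exact absurd (Finset.mem_univ j₀) h
    · push_neg at hs
      left
      rw [← Matrix.exists_mulVec_eq_zero_iff]
      refine ⟨fun _ => 1, ?_, ?_⟩
      · intro h
        have := congrFun h 0
        norm_num at this
      · funext i
        simp only [Matrix.mulVec, dotProduct, mul_one, Pi.zero_apply]
        exact hs i

lemma tu_det {I : Type} [Fintype I] [DecidableEq I] (A : Matrix I I ℤ)
    (hA : ∀ i, RowOK (A i)) : A.det = 0 ∨ A.det = 1 ∨ A.det = -1 := by
  classical
  let e := Fintype.equivFin I
  have hdet : ((Matrix.reindex e e) A).det = A.det := Matrix.det_reindex_self e A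
  rw [← hdet]
  apply tu_fin
  intro i
  have hrow : ((Matrix.reindex e e) A) i = (A (e.symm i)) ∘ e.symm := rfl
  rw [hrow]
  exact rowOK_comp (hA _) e.symm.injective

lemma det_updateRow_of_single_column {I : Type} [Fintype I] [DecidableEq I]
    (B : Matrix I I ℤ) (j₀ : I) (e : I) (hcol : ∀ i, B i j₀ = (Pi.single e (1:ℤ) : I → ℤ) i) :
    B.det = (B.updateRow e (Pi.single j₀ 1)).det := by
  have hBe : B e = Pi.single j₀ (1:ℤ) + (B e - Pi.single j₀ 1) := by ring
  have hz : (B.updateRow e (B e - Pi.single j₀ 1)).det = 0 := by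
    apply Matrix.det_eq_zero_of_column_eq_zero j₀
    intro i
    by_cases hie : i = e
    · subst hie
      rw [Matrix.updateRow_self]
      have := hcol i
      simp only [Pi.sub_apply, this, Pi.single_eq_same]
      ring
    · rw [Matrix.updateRow_ne hie, hcol i, Pi.single_eq_of_ne hie]
  calc B.det = (B.updateRow e (B e)).det := by rw [Matrix.updateRow_eq_self]
  _ = (B.updateRow e (Pi.single j₀ 1 + (B e - Pi.single j₀ 1))).det := by rw [← hBe]
  _ = (B.updateRow e (Pi.single j₀ 1)).det + (B.updateRow e (B e - Pi.single j₀ 1)).det :=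
      Matrix.det_updateRow_add _ _ _ _
  _ = (B.updateRow e (Pi.single j₀ 1)).det := by rw [hz, add_zero]

end TU
section Det
open Matrix Module

variable {V E : Type} [Fintype V] [DecidableEq V] [Fintype E] [DecidableEq E]

def Nz (th hd : E → V) (γ : E → ℤ × ℤ) (v₀ : V) (q : Fin 2)
    (eqv : E ≃ ({w : V // w ≠ v₀} ⊕ Unit)) : Matrix E E ℤ :=
  Matrix.of fun e f => Sum.elim (fun w : {w : V // w ≠ v₀} => incid th hd e w.1)
    (fun _ => if q = 0 then (γ e).1 else (γ e).2) (eqv f)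

lemma incid_vals (th hd : E → V) (e : E) (w : V) :
    incid th hd e w = 0 ∨ incid th hd e w = 1 ∨ incid th hd e w = -1 := by
  unfold incid; split_ifs <;> norm_num

lemma incid_eq_one (th hd : E → V) {e : E} {w : V} (h : incid th hd e w = 1) : hd e = w := by
  by_contra hh
  unfold incid at h
  rw [if_neg hh] at h
  split_ifs at h <;> norm_num at h

lemma incid_eq_neg_one (th hd : E → V) {e : E} {w : V} (h : incid th hd e w = -1) :
    th e = w := by
  by_contra hh
  unfold incid at h
  rw [if_neg hh] at h
  split_ifs at h <;> norm_num at h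

lemma incid_rowsum (th hd : E → V) (e : E) : ∑ v, incid th hd e v = 0 := by
  unfold incid
  rw [Finset.sum_sub_distrib]
  rw [Finset.sum_ite_eq Finset.univ (hd e) (fun _ => (1:ℤ)),
    Finset.sum_ite_eq Finset.univ (th e) (fun _ => (1:ℤ))]
  simp

lemma exists_cofactor_ne (th hd : E → V) (γ : E → ℤ × ℤ) (v₀ : V) (q : Fin 2)
    (eqv : E ≃ ({w : V // w ≠ v₀} ⊕ Unit)) (hconn : Conn th hd Finset.univ)
    (hcard : Fintype.card E = Fintype.card V) :
    ∃ e₀, ((Nz th hd γ v₀ q eqv).updateCol (eqv.symm (Sum.inr ()))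
      (Pi.single e₀ 1)).det ≠ 0 := by
  classical
  set j₀ : E := eqv.symm (Sum.inr ()) with hj₀
  set colQ : {w : V // w ≠ v₀} → (E → ℚ) :=
    fun w => fun e => ((incid th hd e w.1 : ℤ) : ℚ) with hcolQ
  have hLI : LinearIndependent ℚ colQ := by
    rw [Fintype.linearIndependent_iff]
    intro g hg
    set z : V → ℚ := fun v => if h : v = v₀ then 0 else g ⟨v, h⟩ with hz
    have hzv₀ : z v₀ = 0 := by rw [hz]; exact dif_pos rfl
    have hdz : ∀ e, dmap th hd z e
        = ∑ v ∈ Finset.univ.erase v₀, z v * ((incid th hd e v : ℤ) : ℚ) := by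
      intro e
      have h1 : dmap th hd z e = ∑ v, z v * ((incid th hd e v : ℤ) : ℚ) := by
        simp only [dmap, mulVecLin_apply, mulVec, dotProduct, Bq, Matrix.of_apply]
        exact Finset.sum_congr rfl fun v _ => mul_comm _ _
      rw [h1, ← Finset.add_sum_erase _ _ (Finset.mem_univ v₀), hzv₀, zero_mul, zero_add]
    have hsub : ∀ e, ∑ v ∈ Finset.univ.erase v₀, z v * ((incid th hd e v : ℤ) : ℚ)
        = ∑ w : {w : V // w ≠ v₀}, g w * ((incid th hd e w.1 : ℤ) : ℚ) := by
      intro e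
      rw [Finset.sum_subtype (Finset.univ.erase v₀)
        (fun x => by simp [Finset.mem_erase] : ∀ x, x ∈ Finset.univ.erase v₀ ↔ x ≠ v₀)
        (fun v => z v * ((incid th hd e v : ℤ) : ℚ))]
      refine Finset.sum_congr rfl fun w _ => ?_
      simp only [hz]
      rw [dif_neg w.2]
    have hzker : dmap th hd z = 0 := by
      funext e
      have hcombo := congrFun hg e
      rw [Finset.sum_apply] at hcombo
      simp only [Pi.smul_apply, smul_eq_mul, Pi.zero_apply] at hcombo
      rw [Pi.zero_apply, hdz e, hsub e]
      exact hcombo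
    intro w
    have hconst := conn_ker_dmap_const hconn hzker w.1 v₀
    calc g w = z w.1 := by simp only [hz]; rw [dif_neg w.2]
    _ = z v₀ := hconst
    _ = 0 := hzv₀
  have hpos : 0 < Fintype.card V := Fintype.card_pos_iff.mpr ⟨v₀⟩
  have hcard2 : Fintype.card {w : V // w ≠ v₀} = Fintype.card V - 1 := by
    have h1 : Fintype.card {w : V // ¬ w = v₀} = Fintype.card V - Fintype.card {w : V // w = v₀} :=
      Fintype.card_subtype_compl _
    rw [Fintype.card_subtype_eq v₀] at h1
    exact h1
  have hspan : ∃ e₀, (Pi.single e₀ 1 : E → ℚ) ∉ Submodule.span ℚ (Set.range colQ) := by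
    by_contra h
    push_neg at h
    have htop : Submodule.span ℚ (Set.range colQ) = ⊤ := by
      rw [eq_top_iff]
      intro u _
      have hu : u = ∑ e, u e • (Pi.single e 1 : E → ℚ) := by
        have h1 : ∀ e, u e • (Pi.single e 1 : E → ℚ) = Pi.single e (u e) := by
          intro e
          funext j
          by_cases hj : j = e <;> simp [Pi.single_apply, hj]
        rw [Finset.sum_congr rfl fun e _ => h1 e, Finset.univ_sum_single]
      rw [hu]
      exact Submodule.sum_mem _ fun e _ => Submodule.smul_mem _ _ (h e)
    have hfr := finrank_span_eq_card hLI
    rw [htop, finrank_top, Module.finrank_pi] at hfr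
    rw [hcard2] at hfr
    omega
  obtain ⟨e₀, he₀⟩ := hspan
  refine ⟨e₀, ?_⟩
  set u : ({w : V // w ≠ v₀} ⊕ Unit) → (E → ℚ) :=
    Sum.elim colQ (fun _ => Pi.single e₀ 1) with hu
  have hsingle_ne : (Pi.single e₀ 1 : E → ℚ) ≠ 0 := by
    intro h
    have := congrFun h e₀
    simp at this
  have hLIu : LinearIndependent ℚ u := by
    apply LinearIndependent.sum_type hLI
    · exact linearIndependent_unique_iff.mpr hsingle_ne
    · rw [Set.range_const]
      exact (Submodule.disjoint_span_singleton' hsingle_ne).mpr he₀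
  have hLIcols : LinearIndependent ℚ (fun f => u (eqv f)) := hLIu.comp eqv eqv.injective
  set B := (Nz th hd γ v₀ q eqv).updateCol j₀ (Pi.single e₀ 1) with hB
  set BQ : Matrix E E ℚ := B.map (fun z : ℤ => (z : ℚ)) with hBQ
  have hcols : ∀ f, (fun e => BQ e f) = u (eqv f) := by
    intro f
    funext e
    cases hf : eqv f with
    | inl w =>
      have hfne : f ≠ j₀ := by
        intro hh
        rw [hh, hj₀, Equiv.apply_symm_apply] at hf
        cases hf
      have h1 : B e f = incid th hd e w.1 := by
        rw [hB, Matrix.updateCol_apply, if_neg hfne]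
        simp [Nz, hf]
      have h2 : BQ e f = ((B e f : ℤ) : ℚ) := rfl
      rw [h2, h1, hu]
      rfl
    | inr un =>
      cases un
      have hfeq : f = j₀ := by rw [hj₀, ← hf, Equiv.symm_apply_apply]
      have h1 : B e f = (Pi.single e₀ 1 : E → ℤ) e := by
        rw [hB, Matrix.updateCol_apply, if_pos hfeq]
      have h2 : BQ e f = ((B e f : ℤ) : ℚ) := rfl
      rw [h2, h1, hu]
      show ((Pi.single e₀ (1:ℤ) : E → ℤ) e : ℚ) = (Sum.elim colQ (fun _ => Pi.single e₀ 1) (Sum.inr PUnit.unit)) e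
      rw [Sum.elim_inr]
      by_cases he : e = e₀ <;> simp [Pi.single_apply, he]
  have hunit : IsUnit BQ := by
    rw [← Matrix.linearIndependent_cols_iff_isUnit]
    have heq : (fun j => BQᵀ j) = fun j => u (eqv j) := by
      funext j
      exact hcols j
    change LinearIndependent ℚ (fun j => BQᵀ j)
    rw [heq]
    exact hLIcols
  have hdetQ : BQ.det ≠ 0 := by
    intro h
    have := (Matrix.isUnit_iff_isUnit_det BQ).mp hunit
    rw [h] at this
    exact (not_isUnit_zero : ¬ IsUnit (0:ℚ)) this
  intro h
  apply hdetQ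
  have hmap : BQ.det = ((B.det : ℤ) : ℚ) := by
    have hh := RingHom.map_det (Int.castRingHom ℚ) B
    rw [RingHom.mapMatrix_apply] at hh
    exact hh.symm
  rw [hmap, h]
  norm_num

lemma detNz (th hd : E → V) (γ : E → ℤ × ℤ) (v₀ : V) (q : Fin 2)
    (eqv : E ≃ ({w : V // w ≠ v₀} ⊕ Unit)) (hconn : Conn th hd Finset.univ)
    (hcard : Fintype.card E = Fintype.card V)
    {x : E → ℤ} (hgen : ∀ z, IsCycle th hd Finset.univ z → ∃ m : ℤ, ∀ e, z e = m * x e) :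
    (Nz th hd γ v₀ q eqv).det = (if q = 0 then (rho γ x).1 else (rho γ x).2) ∨
    (Nz th hd γ v₀ q eqv).det = -(if q = 0 then (rho γ x).1 else (rho γ x).2) := by
  classical
  set j₀ : E := eqv.symm (Sum.inr ()) with hj₀
  set N : Matrix E E ℤ := Nz th hd γ v₀ q eqv with hN
  have hNj₀ : ∀ e, N e j₀ = (if q = 0 then (γ e).1 else (γ e).2) := by
    intro e
    simp [hN, Nz, hj₀]
  set c' : E → ℤ := fun e => N.cramer (Pi.single e 1) j₀ with hc'
  have hL : ∀ y : E → ℤ, N.cramer y j₀ = ∑ e, y e * c' e := by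
    intro y
    have hy : y = ∑ e, y e • (Pi.single e 1 : E → ℤ) := by
      have h1 : ∀ e, y e • (Pi.single e 1 : E → ℤ) = Pi.single e (y e) := by
        intro e
        funext j
        by_cases hj : j = e <;> simp [Pi.single_apply, hj]
      rw [Finset.sum_congr rfl fun e _ => h1 e, Finset.univ_sum_single]
    conv_lhs => rw [hy]
    rw [map_sum]
    rw [Finset.sum_apply]
    refine Finset.sum_congr rfl fun e _ => ?_
    rw [LinearMap.map_smul]
    rfl
  have hdet : N.det = ∑ e, N e j₀ * c' e := by
    have h1 : N.det = N.cramer (fun i => N i j₀) j₀ := by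
      rw [Matrix.cramer_apply, Matrix.updateCol_eq_self]
    rw [h1, hL]
  have hcolzero : ∀ f, f ≠ j₀ → ∑ e, N e f * c' e = 0 := by
    intro f hf
    rw [← hL (fun e => N e f), Matrix.cramer_apply]
    rw [← Matrix.det_transpose]
    have h3 : (N.updateCol j₀ fun i => N i f)ᵀ = Nᵀ.updateRow j₀ (fun i => N i f) := by
      ext a b
      rw [Matrix.transpose_apply, Matrix.updateCol_apply, Matrix.updateRow_apply]
      by_cases hb : a = j₀
      · rw [if_pos hb, if_pos hb]
      · rw [if_neg hb, if_neg hb]; rfl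
    rw [h3]
    apply Matrix.det_zero_of_row_eq (Ne.symm hf)
    rw [Matrix.updateRow_self, Matrix.updateRow_ne hf]
    rfl
  have hcw : ∀ (w : V) (hw : w ≠ v₀), ∑ e, c' e * incid th hd e w = 0 := by
    intro w hw
    have hf : eqv (eqv.symm (Sum.inl ⟨w, hw⟩)) = Sum.inl ⟨w, hw⟩ := Equiv.apply_symm_apply _ _
    have hfne : eqv.symm (Sum.inl ⟨w, hw⟩) ≠ j₀ := by
      rw [hj₀]
      intro h
      have h2 := congrArg eqv h
      rw [hf, Equiv.apply_symm_apply] at h2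
      cases h2
    have h0 := hcolzero _ hfne
    rw [← h0]
    refine Finset.sum_congr rfl fun e _ => ?_
    have : N e (eqv.symm (Sum.inl ⟨w, hw⟩)) = incid th hd e w := by
      simp [hN, Nz, hf]
    rw [this, mul_comm]
  have hcyc' : IsCycle th hd Finset.univ c' := by
    refine ⟨fun e he => absurd (Finset.mem_univ e) he, fun v => ?_⟩
    by_cases hv : v = v₀
    · subst hv
      have hkey : ∀ e, incid th hd e v = - ∑ w ∈ Finset.univ.erase v, incid th hd e w := by
        intro e
        have := incid_rowsum th hd e
        rw [← Finset.add_sum_erase _ _ (Finset.mem_univ v)] at this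
        linarith
      calc ∑ e, c' e * incid th hd e v
          = ∑ e, ∑ w ∈ Finset.univ.erase v, (- (c' e * incid th hd e w)) := by
            refine Finset.sum_congr rfl fun e _ => ?_
            rw [hkey e, Finset.sum_neg_distrib, mul_neg, Finset.mul_sum]
      _ = ∑ w ∈ Finset.univ.erase v, ∑ e, (- (c' e * incid th hd e w)) := Finset.sum_comm
      _ = 0 := Finset.sum_eq_zero fun w hw => by
            rw [Finset.sum_neg_distrib, hcw w (Finset.mem_erase.mp hw).1, neg_zero]
    · exact hcw v hv
  have hTUrow : ∀ e, c' e = 0 ∨ c' e = 1 ∨ c' e = -1 := by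
    intro e
    have hcram : c' e = (N.updateCol j₀ (Pi.single e 1)).det := Matrix.cramer_apply _ _ _
    set B := N.updateCol j₀ (Pi.single e 1) with hB
    have hcolB : ∀ i, B i j₀ = (Pi.single e (1:ℤ) : E → ℤ) i := by
      intro i
      rw [hB, Matrix.updateCol_self]
    rw [hcram, det_updateRow_of_single_column B j₀ e hcolB]
    apply tu_det
    intro i
    by_cases hie : i = e
    · subst hie
      rw [Matrix.updateRow_self]
      refine ⟨fun j => ?_, fun j j' h1 h2 => ?_, fun j j' h1 h2 => ?_⟩
      · by_cases hj : j = j₀ <;> simp [Pi.single_apply, hj]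
      · by_cases hj : j = j₀ <;> by_cases hj' : j' = j₀ <;> simp [Pi.single_apply, hj, hj'] at h1 h2 ⊢
      · by_cases hj : j = j₀ <;> simp [Pi.single_apply, hj] at h1
    · rw [Matrix.updateRow_ne hie]
      have hrow : ∀ j, B i j = if j = j₀ then 0 else N i j := by
        intro j
        rw [hB, Matrix.updateCol_apply]
        by_cases hj : j = j₀
        · rw [if_pos hj, if_pos hj, Pi.single_eq_of_ne hie]
        · rw [if_neg hj, if_neg hj]
      have hW : ∀ j, j ≠ j₀ → ∃ w : {w : V // w ≠ v₀},
          eqv j = Sum.inl w ∧ N i j = incid th hd i w.1 := by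
        intro j hj
        cases h : eqv j with
        | inl w => exact ⟨w, rfl, by simp [hN, Nz, h]⟩
        | inr u =>
          exfalso
          apply hj
          rw [hj₀]
          cases u
          rw [← h, Equiv.symm_apply_apply]
      refine ⟨fun j => ?_, fun j j' h1 h2 => ?_, fun j j' h1 h2 => ?_⟩
      · rw [hrow j]
        by_cases hj : j = j₀
        · rw [if_pos hj]; left; rfl
        · rw [if_neg hj]
          obtain ⟨w, -, hw2⟩ := hW j hj
          rw [hw2]
          exact incid_vals th hd i w.1
      · rw [hrow j] at h1
        rw [hrow j'] at h2
        by_cases hj : j = j₀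
        · rw [if_pos hj] at h1; norm_num at h1
        · by_cases hj' : j' = j₀
          · rw [if_pos hj'] at h2; norm_num at h2
          · rw [if_neg hj] at h1
            rw [if_neg hj'] at h2
            obtain ⟨w, hw1, hw2⟩ := hW j hj
            obtain ⟨w', hw1', hw2'⟩ := hW j' hj'
            rw [hw2] at h1
            rw [hw2'] at h2
            have : w = w' := Subtype.ext ((incid_eq_one th hd h1).symm.trans (incid_eq_one th hd h2))
            apply eqv.injective
            rw [hw1, hw1', this]
      · rw [hrow j] at h1
        rw [hrow j'] at h2
        by_cases hj : j = j₀
        · rw [if_pos hj] at h1; norm_num at h1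
        · by_cases hj' : j' = j₀
          · rw [if_pos hj'] at h2; norm_num at h2
          · rw [if_neg hj] at h1
            rw [if_neg hj'] at h2
            obtain ⟨w, hw1, hw2⟩ := hW j hj
            obtain ⟨w', hw1', hw2'⟩ := hW j' hj'
            rw [hw2] at h1
            rw [hw2'] at h2
            have : w = w' := Subtype.ext
              ((incid_eq_neg_one th hd h1).symm.trans (incid_eq_neg_one th hd h2))
            apply eqv.injective
            rw [hw1, hw1', this]
  obtain ⟨e₀, he₀⟩ := exists_cofactor_ne th hd γ v₀ q eqv hconn hcard
  have hc'e₀ : c' e₀ ≠ 0 := by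
    have hceq : c' e₀ = (N.updateCol j₀ (Pi.single e₀ 1)).det := Matrix.cramer_apply _ _ _
    rw [hceq]
    exact he₀
  obtain ⟨m, hm⟩ := hgen c' hcyc'
  have hm0 : m ≠ 0 := by
    intro h
    apply hc'e₀
    rw [hm e₀, h, zero_mul]
  have hmpm : m = 1 ∨ m = -1 := by
    have h1 := hm e₀
    rcases hTUrow e₀ with h | h | h
    · exact absurd h hc'e₀
    · rw [h] at h1
      rcases Int.eq_one_or_neg_one_of_mul_eq_one' h1.symm with ⟨h2, -⟩ | ⟨h2, -⟩
      · left; exact h2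
      · right; exact h2
    · rw [h] at h1
      have h1' : m * (- x e₀) = 1 := by linarith
      rcases Int.eq_one_or_neg_one_of_mul_eq_one' h1' with ⟨h2, -⟩ | ⟨h2, -⟩
      · left; exact h2
      · right; exact h2
  have htq : (if q = 0 then (rho γ x).1 else (rho γ x).2)
      = ∑ e, x e * (if q = 0 then (γ e).1 else (γ e).2) := by
    split_ifs with hq
    · rw [rho, Prod.fst_sum]
      exact Finset.sum_congr rfl fun e _ => by simp [smul_eq_mul]
    · rw [rho, Prod.snd_sum]
      exact Finset.sum_congr rfl fun e _ => by simp [smul_eq_mul]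
  have hfinal : N.det = m * (if q = 0 then (rho γ x).1 else (rho γ x).2) := by
    rw [hdet, htq, Finset.mul_sum]
    refine Finset.sum_congr rfl fun e _ => ?_
    rw [hNj₀ e, hm e]
    ring
  rcases hmpm with h | h
  · left; rw [hfinal, h, one_mul]
  · right; rw [hfinal, h]; ring

end Det
section Final
open Matrix Module
variable {V E : Type} [Fintype V] [DecidableEq V] [Fintype E] [DecidableEq E]

lemma det_Ment (th hd : E → V) (γ : E → ℤ × ℤ) (v₀ : V) (q : Fin 2)
    (eqv : E ≃ ({w : V // w ≠ v₀} ⊕ Unit)) :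
    Matrix.det (Matrix.of fun e f : E =>
        Ment th hd γ e (Sum.elim (fun w : {w : V // w ≠ v₀} => (Sum.inl (w : V) : V ⊕ Fin 2))
          (fun _ => Sum.inr q) (eqv f)))
      = MvPolynomial.C (((Nz th hd γ v₀ q eqv).det : ℤ) : ℚ) * ∏ e, MvPolynomial.X e := by
  classical
  set φ : ℤ →+* MvPolynomial E ℚ :=
    (MvPolynomial.C : ℚ →+* MvPolynomial E ℚ).comp (Int.castRingHom ℚ) with hφ
  have hfac : (Matrix.of fun e f : E =>
      Ment th hd γ e (Sum.elim (fun w : {w : V // w ≠ v₀} => (Sum.inl (w : V) : V ⊕ Fin 2))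
        (fun _ => Sum.inr q) (eqv f)))
      = Matrix.diagonal (fun e => (MvPolynomial.X e : MvPolynomial E ℚ))
        * ((Nz th hd γ v₀ q eqv).map φ) := by
    apply Matrix.ext
    intro e f
    rw [Matrix.diagonal_mul, Matrix.of_apply]
    cases hf : eqv f with
    | inl w =>
      simp only [Sum.elim_inl]
      rw [Ment_eq]
      have h2 : Nz th hd γ v₀ q eqv e f = incid th hd e w.1 := by simp [Nz, hf]
      have h3 : Nq th hd γ e (Sum.inl (w : V)) = ((incid th hd e w.1 : ℤ) : ℚ) := rfl
      rw [h3]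
      show MvPolynomial.X e * MvPolynomial.C ((incid th hd e w.1 : ℤ) : ℚ)
        = MvPolynomial.X e * φ (Nz th hd γ v₀ q eqv e f)
      rw [h2]
      rfl
    | inr un =>
      cases un
      simp only [Sum.elim_inr]
      rw [Ment_eq]
      have h2 : Nz th hd γ v₀ q eqv e f = (if q = 0 then (γ e).1 else (γ e).2) := by
        simp [Nz, hf]
      have h3 : Nq th hd γ e (Sum.inr q) = (((if q = 0 then (γ e).1 else (γ e).2) : ℤ) : ℚ) := rfl
      rw [h3]
      show MvPolynomial.X e * MvPolynomial.C (((if q = 0 then (γ e).1 else (γ e).2) : ℤ) : ℚ)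
        = MvPolynomial.X e * φ (Nz th hd γ v₀ q eqv e f)
      rw [h2]
      rfl
  rw [hfac, Matrix.det_mul, Matrix.det_diagonal]
  have hmap : ((Nz th hd γ v₀ q eqv).map φ).det = φ ((Nz th hd γ v₀ q eqv).det) := by
    have hh := RingHom.map_det φ (Nz th hd γ v₀ q eqv)
    rw [RingHom.mapMatrix_apply] at hh
    exact hh.symm
  rw [hmap]
  have : φ ((Nz th hd γ v₀ q eqv).det) = MvPolynomial.C (((Nz th hd γ v₀ q eqv).det : ℤ) : ℚ) :=
    rfl
  rw [this, mul_comm]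

end Final
end S15


/-- For a colored graph with `n` vertices, `n` edges and ℤ²-rank 1: it is a `(1,1,1)`-graph
iff `M_{1,1,2}(G,γ)` has rank `n`; moreover, if so, with `t = ρ(C)` for the unique cycle `C`
(a generator of the group of cycle images), the `n×n` minor keeping all vertex columns but
one together with the `q`-th extra column has determinant `± t_q · ∏ a_e`. -/
theorem statement15 {V E : Type} [Fintype V] [DecidableEq V] [Fintype E] [DecidableEq E]
    (th hd : E → V) (γ : E → ℤ × ℤ)
    (hcard : Fintype.card E = Fintype.card V)
    (hrk : zrank th hd γ Finset.univ = 1) :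
    ((Conn th hd Finset.univ ∧ zrank th hd γ Finset.univ = 1) ↔
      (Matrix.of fun (e : E) (c : V ⊕ Fin 2) => Ment th hd γ e c).rank = Fintype.card V) ∧
    (Conn th hd Finset.univ →
      ∃ t : ℤ × ℤ,
        (∃ x, IsCycle th hd Finset.univ x ∧ rho γ x = t) ∧
        (∀ x, IsCycle th hd Finset.univ x → ∃ m : ℤ, rho γ x = m • t) ∧
        ∀ (v₀ : V) (q : Fin 2) (eqv : E ≃ ({w : V // w ≠ v₀} ⊕ Unit)),
          Matrix.det (Matrix.of fun e f : E =>
              Ment th hd γ e (Sum.elim (fun w : {w : V // w ≠ v₀} => (Sum.inl (w : V) : V ⊕ Fin 2)) (fun _ => Sum.inr q) (eqv f)))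
            = (((if q = 0 then t.1 else t.2) : ℤ) : MvPolynomial E ℚ) * ∏ e, MvPolynomial.X e ∨
          Matrix.det (Matrix.of fun e f : E =>
              Ment th hd γ e (Sum.elim (fun w : {w : V // w ≠ v₀} => (Sum.inl (w : V) : V ⊕ Fin 2)) (fun _ => Sum.inr q) (eqv f)))
            = -((((if q = 0 then t.1 else t.2) : ℤ) : MvPolynomial E ℚ) * ∏ e, MvPolynomial.X e)) := by
  constructor
  · exact S15.part1 th hd γ hcard hrk
  · intro hconn
    obtain ⟨x, hxc, hrx, hgcd, hgen⟩ := S15.exists_generator hconn hcard hrk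
    refine ⟨rho γ x, ⟨x, hxc, rfl⟩, ?_, ?_⟩
    · intro z hz
      obtain ⟨m, hm⟩ := hgen z hz
      refine ⟨m, ?_⟩
      rw [show z = fun e => m * x e from funext hm, S15.rho_mul]
    · intro v₀ q eqv
      have hdet := S15.detNz th hd γ v₀ q eqv hconn hcard hgen
      have hconv := S15.det_Ment th hd γ v₀ q eqv
      have hcast : MvPolynomial.C (((if q = 0 then (rho γ x).1 else (rho γ x).2) : ℤ) : ℚ)
          = (((if q = 0 then (rho γ x).1 else (rho γ x).2) : ℤ) : MvPolynomial E ℚ) :=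
        map_intCast (MvPolynomial.C : ℚ →+* MvPolynomial E ℚ) _
      rcases hdet with h | h
      · left
        rw [hconv, h, hcast]
      · right
        rw [hconv, h, Int.cast_neg, map_neg, neg_mul, hcast]
end
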